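/- arXiv:2103.02443 — 7 statements merged into one kernel-verified Lean document; each statement's English description precedes it below -/
import Mathlib

section
/- Let a : ℕ → ℂ with a(0) = 0, and suppose there are constants C > 0 and σ ≥ 0 with |a(n)| ≤ C·n^σ for all n ≥ 1. Then for every s ∈ ℂ with Re(s) > σ + 1, the integral ∫_0^∞ y^{s−1} · (∑_{n=1}^∞ a(n)·e^{−2πny}) dy converges and equals Γ(s)·(2π)^{−s} · ∑_{n=1}^∞ a(n)·n^{−s}. -/
open MeasureTheory

open Complex Real Set Filter in
private lemma aux_int_stmt3 {s : ℂ} (hs : 0 < s.re) {r : ℝ} (hr : 0 < r) :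
    IntegrableOn (fun t : ℝ => (t : ℂ) ^ (s - 1) * (Real.exp (-r * t) : ℂ)) (Set.Ioi 0) := by
  have h := Complex.GammaIntegral_convergent hs
  rw [← mul_zero r, ← integrableOn_Ioi_comp_mul_left_iff _ _ hr] at h
  refine IntegrableOn.congr_fun (h.const_mul (1 / (r : ℂ) ^ (s - 1)))
    (fun t (ht : 0 < t) => ?_) measurableSet_Ioi
  have hne : (r : ℂ) ^ (s - 1) ≠ 0 := by
    rw [Ne, Complex.cpow_eq_zero_iff, not_and_or]
    exact Or.inl (Complex.ofReal_ne_zero.mpr hr.ne')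
  rw [Complex.ofReal_mul, mul_cpow_ofReal_nonneg hr.le ht.le,
    show -(r * t) = -r * t by ring]
  field_simp

open Complex Real Set Filter in
private lemma aux_norm_stmt3 {s : ℂ} (hs : 0 < s.re) {r : ℝ} (hr : 0 < r) :
    ∫ t in Set.Ioi (0:ℝ), ‖(t : ℂ) ^ (s - 1) * (Real.exp (-r * t) : ℂ)‖
      = (1 / r) ^ s.re * Real.Gamma s.re := by
  rw [← Real.integral_rpow_mul_exp_neg_mul_Ioi hs hr]
  refine setIntegral_congr_fun measurableSet_Ioi (fun t ht => ?_)
  rw [norm_mul, Complex.norm_real, Real.norm_eq_abs, Real.abs_exp,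
    Complex.norm_cpow_eq_rpow_re_of_pos ht, Complex.sub_re, Complex.one_re]
  rw [show -(r * t) = -r * t by ring]

open Complex Real Set Filter in
/-- The Mellin transform of a cusp form restricted to the imaginary axis:
for coefficients of polynomial growth `|a(n)| ≤ C n^σ` and `Re(s) > σ + 1`, the integral
`∫_0^∞ y^(s-1) ∑ a(n) e^(-2πny) dy` converges and equals `Γ(s)(2π)^(-s) ∑ a(n) n^(-s)`. -/
theorem stmt3 (a : ℕ → ℂ) (ha0 : a 0 = 0) (C σ : ℝ) (hC : 0 < C) (hσ : 0 ≤ σ)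
    (hbound : ∀ n : ℕ, 1 ≤ n → ‖a n‖ ≤ C * (n : ℝ) ^ σ)
    (s : ℂ) (hs : σ + 1 < s.re) :
    IntegrableOn (fun y : ℝ => (y : ℂ) ^ (s - 1) *
        ∑' n : ℕ, a (n + 1) * Complex.exp ((-(2 * Real.pi * (n + 1) * y) : ℝ) : ℂ))
      (Set.Ioi 0) ∧
    ∫ y in Set.Ioi (0 : ℝ), (y : ℂ) ^ (s - 1) *
        ∑' n : ℕ, a (n + 1) * Complex.exp ((-(2 * Real.pi * (n + 1) * y) : ℝ) : ℂ)
      = Complex.Gamma s * (2 * (Real.pi : ℂ)) ^ (-s) *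
        ∑' n : ℕ, a (n + 1) * ((n + 1 : ℕ) : ℂ) ^ (-s) := by
  have hs0 : 0 < s.re := by linarith
  set b : ℕ → ℂ := fun n => a (n + 1) with hb
  set p : ℕ → ℝ := fun n => 2 * Real.pi * ((n : ℝ) + 1) with hp
  have hpn : ∀ n : ℕ, 0 < p n := by
    intro n
    have h1 : (0:ℝ) < (n:ℝ) + 1 := by positivity
    have := Real.pi_pos
    simp only [hp]
    positivity
  have hbn : ∀ n : ℕ, ‖b n‖ ≤ C * ((n:ℝ) + 1) ^ σ := by
    intro n
    have := hbound (n + 1) (by omega)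
    simpa using this
  set F : ℕ → ℝ → ℂ := fun n t => (t : ℂ) ^ (s - 1) * (b n * (Real.exp (-p n * t) : ℂ))
    with hF
  -- summability of the exponential series for t > 0
  have hsum_exp : ∀ t : ℝ, 0 < t → Summable fun n => b n * (Real.exp (-p n * t) : ℂ) := by
    intro t ht
    apply Summable.of_norm
    have hr : ‖Real.exp (-(2 * Real.pi * t))‖ < 1 := by
      rw [Real.norm_eq_abs, abs_of_pos (Real.exp_pos _), Real.exp_lt_one_iff]
      have := Real.pi_pos
      nlinarith
    have hgeo : Summable fun n : ℕ => (n:ℝ) ^ (⌈σ⌉₊) * Real.exp (-(2 * Real.pi * t)) ^ n :=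
      summable_pow_mul_geometric_of_norm_lt_one _ hr
    have hgeo' : Summable fun n : ℕ =>
        ((n:ℝ) + 1) ^ (⌈σ⌉₊) * Real.exp (-(2 * Real.pi * t)) ^ (n + 1) := by
      have := (summable_nat_add_iff (f := fun n : ℕ => (n:ℝ) ^ (⌈σ⌉₊) *
        Real.exp (-(2 * Real.pi * t)) ^ n) 1).mpr hgeo
      simpa using this
    apply Summable.of_nonneg_of_le (fun n => norm_nonneg _) _ (hgeo'.mul_left C)
    intro n
    have h1 : ‖b n * (Real.exp (-p n * t) : ℂ)‖ = ‖b n‖ * Real.exp (-p n * t) := by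
      rw [norm_mul, Complex.norm_real, Real.norm_eq_abs, abs_of_pos (Real.exp_pos _)]
    rw [h1]
    have h2 : Real.exp (-p n * t) = Real.exp (-(2 * Real.pi * t)) ^ (n + 1) := by
      rw [← Real.exp_nat_mul]
      congr 1
      simp only [hp]
      push_cast
      ring
    have h3 : ((n:ℝ) + 1) ^ σ ≤ ((n:ℝ) + 1) ^ (⌈σ⌉₊ : ℕ) := by
      rw [← Real.rpow_natCast ((n:ℝ)+1) (⌈σ⌉₊)]
      exact Real.rpow_le_rpow_of_exponent_le (by linarith [Nat.cast_nonneg (α := ℝ) n])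
        (Nat.le_ceil σ)
    calc ‖b n‖ * Real.exp (-p n * t)
        ≤ (C * ((n:ℝ) + 1) ^ σ) * Real.exp (-p n * t) :=
          mul_le_mul_of_nonneg_right (hbn n) (Real.exp_pos _).le
      _ ≤ (C * ((n:ℝ) + 1) ^ (⌈σ⌉₊:ℕ)) * Real.exp (-p n * t) :=
          mul_le_mul_of_nonneg_right (mul_le_mul_of_nonneg_left h3 hC.le) (Real.exp_pos _).le
      _ = C * (((n:ℝ) + 1) ^ (⌈σ⌉₊:ℕ) * Real.exp (-(2 * Real.pi * t)) ^ (n + 1)) := by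
          rw [h2]; ring
  -- summability of the Dirichlet-type series
  have h_sum : Summable fun n => ‖b n‖ / p n ^ s.re := by
    have hmaj : Summable fun n : ℕ => (C / (2 * Real.pi) ^ s.re) * ((n:ℝ) + 1) ^ (σ - s.re) := by
      apply Summable.mul_left
      have h0 : Summable fun n : ℕ => ((n:ℝ)) ^ (σ - s.re) :=
        Real.summable_nat_rpow.mpr (by linarith)
      have := (summable_nat_add_iff (f := fun n : ℕ => ((n:ℝ)) ^ (σ - s.re)) 1).mpr h0
      simpa using this
    refine Summable.of_nonneg_of_le (fun n => by positivity) (fun n => ?_) hmaj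
    have h2π : (0:ℝ) < 2 * Real.pi := by positivity
    have hn1 : (0:ℝ) < (n:ℝ) + 1 := by positivity
    have hps : p n ^ s.re = (2 * Real.pi) ^ s.re * ((n:ℝ) + 1) ^ s.re := by
      simp only [hp]; rw [Real.mul_rpow h2π.le hn1.le]
    rw [hps, div_le_iff₀ (by positivity)]
    calc ‖b n‖ ≤ C * ((n:ℝ) + 1) ^ σ := hbn n
      _ = C / (2 * Real.pi) ^ s.re * ((n:ℝ) + 1) ^ (σ - s.re) *
            ((2 * Real.pi) ^ s.re * ((n:ℝ) + 1) ^ s.re) := by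
          rw [Real.rpow_sub hn1]
          field_simp
  -- the integrand equals t^(s-1) * G t
  have hexp_eq : ∀ (n : ℕ) (t : ℝ),
      Complex.exp ((-(2 * Real.pi * ((n:ℝ) + 1) * t) : ℝ) : ℂ) = (Real.exp (-p n * t) : ℂ) := by
    intro n t
    rw [← Complex.ofReal_exp]
    congr 1
    simp only [hp]
    ring
  have hfun_eq : (fun y : ℝ => (y : ℂ) ^ (s - 1) *
      ∑' n : ℕ, a (n + 1) * Complex.exp ((-(2 * Real.pi * (n + 1) * y) : ℝ) : ℂ))
      = fun t : ℝ => (t : ℂ) ^ (s - 1) * ∑' n : ℕ, b n * (Real.exp (-p n * t) : ℂ) := by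
    funext t
    congr 1
    exact tsum_congr fun n => by rw [hexp_eq n t]
  -- integrability of each term
  have h_int : ∀ n, IntegrableOn (F n) (Set.Ioi 0) := by
    intro n
    have h1 := (aux_int_stmt3 hs0 (hpn n)).const_mul (b n)
    refine IntegrableOn.congr_fun h1 (fun t ht => ?_) measurableSet_Ioi
    simp only [hF]
    ring
  -- value of the integral of the norm of each term
  have h_norm : ∀ n, ∫ t in Set.Ioi (0:ℝ), ‖F n t‖
      = ‖b n‖ * ((1 / p n) ^ s.re * Real.Gamma s.re) := by
    intro n
    have : ∀ t : ℝ, ‖F n t‖ = ‖b n‖ * ‖(t : ℂ) ^ (s - 1) * (Real.exp (-p n * t) : ℂ)‖ := by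
      intro t
      simp only [hF, norm_mul]
      ring
    simp_rw [this]
    rw [integral_const_mul, aux_norm_stmt3 hs0 (hpn n)]
  have h_norm_summable : Summable fun n => ∫ t in Set.Ioi (0:ℝ), ‖F n t‖ := by
    have : Summable fun n => Real.Gamma s.re * (‖b n‖ / p n ^ s.re) := h_sum.mul_left _
    refine this.congr fun n => ?_
    rw [h_norm n, Real.div_rpow zero_le_one (hpn n).le, Real.one_rpow]
    ring
  -- integrability of the sum
  have key_int : IntegrableOn (fun t : ℝ => ∑' n, F n t) (Set.Ioi 0) := by
    constructor
    · -- measurability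
      refine aestronglyMeasurable_of_tendsto_ae (f := fun N t => ∑ n ∈ Finset.range N, F n t)
        atTop (fun N => ?_) ?_
      · exact Finset.aestronglyMeasurable_fun_sum _ fun n _ => (h_int n).1
      · rw [ae_restrict_iff' measurableSet_Ioi]
        filter_upwards with t ht
        have hsF : Summable fun n => F n t :=
          ((hsum_exp t ht).mul_left ((t:ℂ) ^ (s - 1))).congr fun n => by
            simp only [hF]
        exact hsF.hasSum.tendsto_sum_nat
    · -- finite integral
      have hmeas : ∀ n, AEStronglyMeasurable (F n) (volume.restrict (Set.Ioi 0)) :=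
        fun n => (h_int n).1
      rw [hasFiniteIntegral_iff_norm]
      calc ∫⁻ t in Set.Ioi (0:ℝ), ENNReal.ofReal ‖∑' n, F n t‖
          ≤ ∫⁻ t in Set.Ioi (0:ℝ), ∑' n, ENNReal.ofReal ‖F n t‖ := by
            refine lintegral_mono_ae ?_
            rw [ae_restrict_iff' measurableSet_Ioi]
            filter_upwards with t ht
            have hsF : Summable fun n => ‖F n t‖ := by
              have : Summable fun n => F n t :=
                ((hsum_exp t ht).mul_left ((t:ℂ) ^ (s - 1))).congr fun n => by
                  simp only [hF]
              exact this.norm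
            calc ENNReal.ofReal ‖∑' n, F n t‖
                ≤ ENNReal.ofReal (∑' n, ‖F n t‖) :=
                  ENNReal.ofReal_le_ofReal (norm_tsum_le_tsum_norm hsF)
              _ = ∑' n, ENNReal.ofReal ‖F n t‖ :=
                  ENNReal.ofReal_tsum_of_nonneg (fun n => norm_nonneg _) hsF
        _ = ∑' n, ∫⁻ t in Set.Ioi (0:ℝ), ENNReal.ofReal ‖F n t‖ := by
            rw [lintegral_tsum]
            intro n
            exact ((hmeas n).norm.aemeasurable).ennreal_ofReal
        _ = ∑' n, ENNReal.ofReal (∫ t in Set.Ioi (0:ℝ), ‖F n t‖) := by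
            refine tsum_congr fun n => ?_
            rw [← ofReal_integral_eq_lintegral_ofReal (h_int n).norm
              (Filter.Eventually.of_forall fun t => norm_nonneg _)]
        _ = ENNReal.ofReal (∑' n, ∫ t in Set.Ioi (0:ℝ), ‖F n t‖) :=
            (ENNReal.ofReal_tsum_of_nonneg
              (fun n => integral_nonneg fun t => norm_nonneg _) h_norm_summable).symm
        _ < ⊤ := ENNReal.ofReal_lt_top
  have key_int' : IntegrableOn (fun t : ℝ => (t : ℂ) ^ (s - 1) *
      ∑' n : ℕ, b n * (Real.exp (-p n * t) : ℂ)) (Set.Ioi 0) := by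
    refine key_int.congr_fun (fun t ht => ?_) measurableSet_Ioi
    simp only [hF]
    exact tsum_mul_left
  refine ⟨by rw [hfun_eq]; exact key_int', ?_⟩
  -- the value
  have hmel : HasSum (fun n => Complex.Gamma s * b n / (p n : ℂ) ^ s)
      (mellin (fun t => ∑' n : ℕ, b n * (Real.exp (-p n * t) : ℂ)) s) := by
    refine hasSum_mellin (fun n => Or.inr (hpn n)) hs0 (fun t ht => ?_) h_sum
    exact (hsum_exp t ht).hasSum
  have hIoi : ∫ y in Set.Ioi (0 : ℝ), (y : ℂ) ^ (s - 1) *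
      ∑' n : ℕ, a (n + 1) * Complex.exp ((-(2 * Real.pi * (n + 1) * y) : ℝ) : ℂ)
      = mellin (fun t => ∑' n : ℕ, b n * (Real.exp (-p n * t) : ℂ)) s := by
    rw [hfun_eq]
    simp only [mellin, smul_eq_mul]
  rw [hIoi, ← hmel.tsum_eq, ← tsum_mul_left]
  refine tsum_congr fun n => ?_
  have h2π : (0:ℝ) < 2 * Real.pi := by positivity
  have hn1 : (0:ℝ) < (n:ℝ) + 1 := by positivity
  have hcast : ((p n : ℝ) : ℂ) = ((2 * Real.pi : ℝ) : ℂ) * (((n:ℝ) + 1 : ℝ) : ℂ) := by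
    simp only [hp]; push_cast; ring
  have hsplit : ((p n : ℝ) : ℂ) ^ s = ((2 * Real.pi : ℝ) : ℂ) ^ s * (((n:ℝ) + 1 : ℝ) : ℂ) ^ s := by
    rw [hcast, mul_cpow_ofReal_nonneg h2π.le hn1.le]
  have hA : ((2 * Real.pi : ℝ) : ℂ) ^ s ≠ 0 := by
    rw [Ne, Complex.cpow_eq_zero_iff, not_and_or]
    exact Or.inl (Complex.ofReal_ne_zero.mpr h2π.ne')
  have hB : (((n:ℝ) + 1 : ℝ) : ℂ) ^ s ≠ 0 := by
    rw [Ne, Complex.cpow_eq_zero_iff, not_and_or]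
    exact Or.inl (Complex.ofReal_ne_zero.mpr hn1.ne')
  have hc1 : (2 * (Real.pi : ℂ)) = ((2 * Real.pi : ℝ) : ℂ) := by push_cast; ring
  have hc2 : ((n + 1 : ℕ) : ℂ) = (((n:ℝ) + 1 : ℝ) : ℂ) := by push_cast; ring
  rw [hc1, hc2, Complex.cpow_neg, Complex.cpow_neg, hsplit]
  field_simp
  rfl
end

section
/- Let N ≥ 1, let ν be a Dirichlet character modulo N with values in ℂ, and let n ≥ 1 be a natural number with gcd(n, N) = 1. Then ∑_{d ∣ n} ν(d)·conj(ν(n/d)) = ∏_{p ∈ primeFactors(n)} U_{v_p(n)}(Re ν(p)), where v_p(n) is the exponent of p in the prime factorization of n, and the right-hand side (a real number) is regarded as a complex number. -/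
open Finset Polynomial

lemma U_eval_ofReal (k : ℤ) (x : ℝ) :
    (((Polynomial.Chebyshev.U ℝ k).eval x : ℝ) : ℂ)
      = (Polynomial.Chebyshev.U ℂ k).eval (x : ℂ) := by
  rw [← Polynomial.Chebyshev.map_U (algebraMap ℝ ℂ) k, Polynomial.eval_map]
  exact (Polynomial.eval₂_hom (algebraMap ℝ ℂ) x).symm

lemma cheb_step (z : ℂ) (k : ℕ) :
    ∑ j ∈ Finset.range (k + 2), z ^ j * (starRingEnd ℂ) z ^ (k + 1 - j)
      = z * ∑ j ∈ Finset.range (k + 1), z ^ j * (starRingEnd ℂ) z ^ (k - j)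
        + (starRingEnd ℂ) z ^ (k + 1) := by
  rw [Finset.sum_range_succ', Finset.mul_sum]
  simp only [pow_zero, one_mul, Nat.sub_zero, pow_succ, Nat.succ_sub_succ]
  congr 1
  apply Finset.sum_congr rfl
  intro j hj
  ring

lemma cheb_sum (z : ℂ) (hz : z * (starRingEnd ℂ) z = 1) :
    ∀ k : ℕ, ∑ j ∈ Finset.range (k + 1), z ^ j * (starRingEnd ℂ) z ^ (k - j)
      = (Polynomial.Chebyshev.U ℂ (k : ℤ)).eval ((z.re : ℂ))
  | 0 => by simp [Polynomial.Chebyshev.U_zero]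
  | 1 => by
      simp [Polynomial.Chebyshev.U_one, Finset.sum_range_succ]
      rw [add_comm, Complex.add_conj]
      push_cast
      ring
  | (k + 2) => by
      have h1 := cheb_sum z hz (k + 1)
      have h0 := cheb_sum z hz k
      have s2 := cheb_step z (k + 1)
      have s1 := cheb_step z k
      push_cast at h1
      rw [h1] at s2
      rw [h1, h0] at s1
      have hre : z + (starRingEnd ℂ) z = 2 * (z.re : ℂ) := by rw [Complex.add_conj]; push_cast; ring
      have hU : Polynomial.Chebyshev.U ℂ ((k : ℤ) + 2)
          = 2 * Polynomial.X * Polynomial.Chebyshev.U ℂ ((k : ℤ) + 1)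
            - Polynomial.Chebyshev.U ℂ (k : ℤ) := Polynomial.Chebyshev.U_add_two ℂ k
      have hcast : ((k + 2 : ℕ) : ℤ) = (k : ℤ) + 2 := by push_cast; ring
      rw [hcast, hU]
      simp only [Polynomial.eval_sub, Polynomial.eval_mul, Polynomial.eval_ofNat,
        Polynomial.eval_X]
      linear_combination s2 - (starRingEnd ℂ) z * s1
        + ((Polynomial.Chebyshev.U ℂ ((k : ℤ) + 1)).eval ((z.re : ℂ))) * hre
        - ((Polynomial.Chebyshev.U ℂ (k : ℤ)).eval ((z.re : ℂ))) * hz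

/-- The convolution coefficients of `L(s,ν)·L(s,conj ν)`: for `n` coprime to the level,
`∑_{d ∣ n} ν(d) conj(ν(n/d)) = ∏_{p ∣ n} U_{v_p(n)}(Re ν(p))`, where `U_m` is the `m`-th
Chebyshev polynomial of the second kind. -/
theorem stmt5 (N : ℕ) (hN : 1 ≤ N) (ν : DirichletCharacter ℂ N) (n : ℕ) (hn : 1 ≤ n)
    (hcop : Nat.gcd n N = 1) :
    ∑ d ∈ n.divisors, ν (d : ZMod N) * (starRingEnd ℂ) (ν ((n / d : ℕ) : ZMod N))
      = ∏ p ∈ n.primeFactors,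
          (((Polynomial.Chebyshev.U ℝ (n.factorization p : ℤ)).eval
            (ν ((p : ℕ) : ZMod N)).re : ℝ) : ℂ) := by
  have hn0 : n ≠ 0 := Nat.one_le_iff_ne_zero.mp hn
  set F : ArithmeticFunction ℂ := toArithmeticFunction (fun d => ν (d : ZMod N)) with hFdef
  set G : ArithmeticFunction ℂ :=
    toArithmeticFunction (fun d => (starRingEnd ℂ) (ν (d : ZMod N))) with hGdef
  have hFval : ∀ {d : ℕ}, d ≠ 0 → F d = ν (d : ZMod N) := by
    intro d hd
    simp [hFdef, toArithmeticFunction, hd]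
  have hGval : ∀ {d : ℕ}, d ≠ 0 → G d = (starRingEnd ℂ) (ν (d : ZMod N)) := by
    intro d hd
    simp [hGdef, toArithmeticFunction, hd]
  have hF : F.IsMultiplicative := by
    rw [ArithmeticFunction.IsMultiplicative.iff_ne_zero]
    refine ⟨by simp [hFval one_ne_zero], fun {m k} hm hk _ => ?_⟩
    rw [hFval (mul_ne_zero hm hk), hFval hm, hFval hk, Nat.cast_mul, map_mul]
  have hG : G.IsMultiplicative := by
    rw [ArithmeticFunction.IsMultiplicative.iff_ne_zero]
    refine ⟨by simp [hGval one_ne_zero], fun {m k} hm hk _ => ?_⟩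
    rw [hGval (mul_ne_zero hm hk), hGval hm, hGval hk, Nat.cast_mul, map_mul, map_mul]
  have hFG : (F * G).IsMultiplicative := hF.mul hG
  have hlhs : ∑ d ∈ n.divisors, ν (d : ZMod N) * (starRingEnd ℂ) (ν ((n / d : ℕ) : ZMod N))
      = (F * G) n := by
    rw [ArithmeticFunction.mul_apply, Nat.sum_divisorsAntidiagonal (fun a b => F a * G b)]
    refine (Finset.sum_congr rfl fun d hd => ?_).symm
    obtain ⟨hdvd, -⟩ := Nat.mem_divisors.mp hd
    have hd0 : d ≠ 0 := fun h => hn0 (by simpa [h] using hdvd)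
    have hnd0 : n / d ≠ 0 := (Nat.div_ne_zero_iff_of_dvd hdvd).mpr ⟨hn0, hd0⟩
    rw [hFval hd0, hGval hnd0]
  rw [hlhs, hFG.multiplicative_factorization (F * G) hn0,
    Nat.prod_factorization_eq_prod_primeFactors]
  refine Finset.prod_congr rfl fun p hp => ?_
  obtain ⟨hpp, hpdvd, -⟩ := Nat.mem_primeFactors.mp hp
  set k := n.factorization p with hk
  haveI : NeZero N := ⟨Nat.one_le_iff_ne_zero.mp hN⟩
  have hu : IsUnit ((p : ℕ) : ZMod N) :=
    (ZMod.isUnit_iff_coprime p N).mpr (Nat.Coprime.coprime_dvd_left hpdvd hcop)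
  have hnorm : ‖ν ((p : ℕ) : ZMod N)‖ = 1 := by
    have := DirichletCharacter.unit_norm_eq_one ν hu.unit
    rwa [hu.unit_spec] at this
  have hz : ν ((p : ℕ) : ZMod N) * (starRingEnd ℂ) (ν ((p : ℕ) : ZMod N)) = 1 := by
    rw [Complex.mul_conj, Complex.normSq_eq_norm_sq, hnorm]
    norm_num
  have key := cheb_sum (ν ((p : ℕ) : ZMod N)) hz k
  rw [ArithmeticFunction.mul_apply, Nat.sum_divisorsAntidiagonal (fun a b => F a * G b),
    Nat.sum_divisors_prime_pow hpp, U_eval_ofReal, ← key]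
  refine Finset.sum_congr rfl fun j hj => ?_
  have hjk : j ≤ k := Nat.lt_succ_iff.mp (Finset.mem_range.mp hj)
  have hdiv : p ^ k / p ^ j = p ^ (k - j) := Nat.pow_div hjk hpp.pos
  rw [hdiv, hFval (pow_ne_zero j hpp.ne_zero), hGval (pow_ne_zero _ hpp.ne_zero),
    Nat.cast_pow, Nat.cast_pow, map_pow, map_pow, map_pow]
end

section
/- Let N ≥ 1 and let ν be a Dirichlet character modulo N with values in ℂ. Then for every s ∈ ℂ with Re(s) > 1, the integral ∫_0^∞ y^{s/2−1} · (∑_{n=1}^∞ ν(n)·e^{−πn²y/N}) dy converges and equals Γ(s/2)·(π/N)^{−s/2} · ∑_{n=1}^∞ ν(n)·n^{−s}. -/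
open MeasureTheory Real Complex Set Filter

lemma aux_integrable_tsum {α : Type*} [MeasurableSpace α] {μ : Measure α} {F : ℕ → α → ℂ}
    (hF_int : ∀ i, Integrable (F i) μ)
    (hF_sum : Summable fun i ↦ ∫ a, ‖F i a‖ ∂μ) :
    Integrable (fun a ↦ ∑' i, F i a) μ := by
  have hf'' : ∀ i, AEMeasurable (fun x ↦ (‖F i x‖₊ : ENNReal)) μ := fun i ↦ (hF_int i).1.enorm
  have h' : ∑' i, ∫⁻ a, ‖F i a‖₊ ∂μ ≠ ⊤ := by
    have key : ∀ i, ∫⁻ a, ‖F i a‖₊ ∂μ = ‖(∫ a, ‖F i a‖ ∂μ)‖₊ := by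
      intro i
      rw [lintegral_coe_eq_integral (fun a ↦ ‖F i a‖₊) (hF_int i).norm, ENNReal.coe_nnreal_eq, coe_nnnorm,
        Real.norm_of_nonneg (integral_nonneg (fun a ↦ norm_nonneg (F i a)))]
      simp only [coe_nnnorm]
    rw [funext key, ← ENNReal.coe_tsum]
    · exact ENNReal.coe_ne_top
    · simp_rw [← NNReal.summable_coe, coe_nnnorm]
      exact hF_sum.abs
  have hhh : ∀ᵐ a ∂μ, Summable fun n ↦ (‖F n a‖₊ : ℝ) := by
    rw [← lintegral_tsum hf''] at h'
    refine (ae_lt_top' (AEMeasurable.ennreal_tsum hf'') h').mono fun x hx ↦ ?_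
    rw [← ENNReal.tsum_coe_ne_top_iff_summable_coe]
    exact hx.ne
  have hmeas : AEStronglyMeasurable (fun a ↦ ∑' i, F i a) μ := by
    refine aestronglyMeasurable_of_tendsto_ae atTop
      (f := fun n a ↦ ∑ i ∈ Finset.range n, F i a)
      (fun n ↦ Finset.aestronglyMeasurable_fun_sum _ fun i _ ↦ (hF_int i).1) ?_
    filter_upwards [hhh] with x hx
    have hsummable : Summable fun i ↦ F i x := by
      apply Summable.of_norm
      simpa only [coe_nnnorm] using hx
    exact hsummable.hasSum.tendsto_sum_nat
  refine ⟨hmeas, ?_⟩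
  refine lt_of_le_of_lt (le_trans (lintegral_mono fun a ↦ ?_) (le_of_eq (lintegral_tsum hf'')))
    h'.lt_top
  show (‖∑' i, F i a‖₊ : ENNReal) ≤ ∑' i, (‖F i a‖₊ : ENNReal)
  by_cases h : Summable fun i ↦ ‖F i a‖₊
  · rw [← ENNReal.coe_tsum h]
    exact_mod_cast nnnorm_tsum_le h
  · have htop : ∑' i, (‖F i a‖₊ : ENNReal) = ⊤ := by
      by_contra htop
      exact h (ENNReal.tsum_coe_ne_top_iff_summable.mp htop)
    simp [htop]

/-- The Dirichlet `L`-function as the Mellin transform of the ϑ-series (even-character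
normalisation): for `Re(s) > 1`, `∫_0^∞ y^(s/2-1) ∑_{n≥1} ν(n) e^(-πn²y/N) dy` converges
and equals `Γ(s/2)(π/N)^(-s/2) ∑_{n≥1} ν(n) n^(-s)`. -/
theorem stmt9 (N : ℕ) (hN : 1 ≤ N) (ν : DirichletCharacter ℂ N) (s : ℂ) (hs : 1 < s.re) :
    IntegrableOn (fun y : ℝ => (y : ℂ) ^ (s / 2 - 1) *
        ∑' n : ℕ, ν ((n + 1 : ℕ) : ZMod N) *
          ((Real.exp (-Real.pi * (n + 1) ^ 2 * y / N) : ℝ) : ℂ)) (Set.Ioi 0) ∧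
    ∫ y in Set.Ioi (0 : ℝ), (y : ℂ) ^ (s / 2 - 1) *
        ∑' n : ℕ, ν ((n + 1 : ℕ) : ZMod N) *
          ((Real.exp (-Real.pi * (n + 1) ^ 2 * y / N) : ℝ) : ℂ)
      = Complex.Gamma (s / 2) * ((Real.pi / N : ℝ) : ℂ) ^ (-(s / 2)) *
        ∑' n : ℕ, ν ((n + 1 : ℕ) : ZMod N) * ((n + 1 : ℕ) : ℂ) ^ (-s) := by
  have hN0 : (0 : ℝ) < N := by exact_mod_cast hN
  set a : ℕ → ℂ := fun n ↦ ν ((n + 1 : ℕ) : ZMod N) with ha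
  set p : ℕ → ℝ := fun n ↦ π / N * ((n : ℝ) + 1) ^ 2 with hpdef
  have hp : ∀ i, 0 < p i := fun i ↦ by positivity
  have hs2 : 0 < (s / 2).re := by
    rw [Complex.div_ofNat_re]; linarith
  have hexp : ∀ (n : ℕ) (y : ℝ), -Real.pi * ((n : ℝ) + 1) ^ 2 * y / N = -p n * y := by
    intro n y
    simp only [hpdef]
    field_simp
  set F : ℝ → ℂ := fun y ↦ ∑' n : ℕ, a n *
      ((Real.exp (-Real.pi * ((n : ℝ) + 1) ^ 2 * y / N) : ℝ) : ℂ) with hFdef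
  -- summability of the series for each `t > 0`
  have hsummand : ∀ t : ℝ, 0 < t → Summable fun n : ℕ ↦
      a n * ((Real.exp (-Real.pi * ((n : ℝ) + 1) ^ 2 * t / N) : ℝ) : ℂ) := by
    intro t ht
    apply Summable.of_norm
    have hc : 0 < π / N * t := by positivity
    have hr1 : Real.exp (-(π / N * t)) < 1 := by
      rw [Real.exp_lt_one_iff]
      linarith
    refine Summable.of_nonneg_of_le (fun n ↦ norm_nonneg _) (fun n ↦ ?_)
      (Summable.mul_left (Real.exp (-(π / N * t)))
        (summable_geometric_of_lt_one (Real.exp_nonneg _) hr1))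
    rw [norm_mul, Complex.norm_real, Real.norm_eq_abs, Real.abs_exp]
    calc ‖a n‖ * Real.exp (-Real.pi * ((n : ℝ) + 1) ^ 2 * t / N)
        ≤ 1 * Real.exp (-Real.pi * ((n : ℝ) + 1) ^ 2 * t / N) :=
          mul_le_mul_of_nonneg_right (ν.norm_le_one _) (Real.exp_nonneg _)
      _ ≤ Real.exp (-(π / N * t)) * Real.exp (-(π / N * t)) ^ n := by
          rw [one_mul, ← Real.exp_nat_mul, ← Real.exp_add]
          apply Real.exp_le_exp.mpr
          have heq : -Real.pi * ((n : ℝ) + 1) ^ 2 * t / N = -(π / N * t) * ((n : ℝ) + 1) ^ 2 := by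
            ring
          rw [heq]
          have hx : 0 ≤ (π / N * t) * ((n : ℝ) * ((n : ℝ) + 1)) := by positivity
          nlinarith [hx]
  have hF : ∀ t ∈ Set.Ioi (0 : ℝ), HasSum (fun i : ℕ ↦ a i * Real.exp (-p i * t)) (F t) := by
    intro t ht
    have h2 : (fun i : ℕ ↦ a i * ((Real.exp (-p i * t) : ℝ) : ℂ))
        = fun n : ℕ ↦ a n * ((Real.exp (-Real.pi * ((n : ℝ) + 1) ^ 2 * t / N) : ℝ) : ℂ) := by
      funext n; rw [hexp]
    rw [h2]
    exact (hsummand t ht).hasSum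
  have hσ : 2 * (s / 2).re = s.re := by
    rw [Complex.div_ofNat_re]; ring
  have h_sum : Summable fun i : ℕ ↦ ‖a i‖ / p i ^ (s / 2).re := by
    have hsummable : Summable fun i : ℕ ↦ 1 / ((i : ℝ) + 1) ^ (2 * (s / 2).re) := by
      have h1 : Summable fun n : ℕ ↦ 1 / (n : ℝ) ^ (2 * (s / 2).re) :=
        Real.summable_one_div_nat_rpow.mpr (by rw [hσ]; exact hs)
      have h2 := h1.comp_injective (add_left_injective 1)
      refine h2.congr fun i ↦ ?_
      simp [Function.comp]
    refine Summable.of_nonneg_of_le (fun i ↦ by positivity) (fun i ↦ ?_)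
      (hsummable.mul_left ((π / N) ^ (s / 2).re)⁻¹)
    have h1 : p i ^ (s / 2).re = (π / N) ^ (s / 2).re * ((i : ℝ) + 1) ^ (2 * (s / 2).re) := by
      rw [hpdef]
      rw [Real.mul_rpow (by positivity) (by positivity), ← Real.rpow_natCast ((i : ℝ) + 1) 2,
        ← Real.rpow_mul (by positivity)]
      norm_num
    calc ‖a i‖ / p i ^ (s / 2).re ≤ 1 / p i ^ (s / 2).re := by
          gcongr
          · exact ν.norm_le_one _
      _ = ((π / N) ^ (s / 2).re)⁻¹ * (1 / ((i : ℝ) + 1) ^ (2 * (s / 2).re)) := by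
          rw [h1, one_div, mul_inv, one_div]
  have H := hasSum_mellin (fun i ↦ Or.inr (hp i)) hs2 hF h_sum
  -- per-term integrand
  set G : ℕ → ℝ → ℂ := fun i t ↦ (t : ℂ) ^ (s / 2 - 1) * (a i * Real.exp (-p i * t)) with hGdef
  have hGint : ∀ i, IntegrableOn (G i) (Set.Ioi 0) := by
    intro i
    simp only [hGdef]
    simp_rw [← mul_assoc, mul_comm _ (a i), mul_assoc]
    have hGI := Complex.GammaIntegral_convergent hs2
    rw [← mul_zero (p i), ← integrableOn_Ioi_comp_mul_left_iff _ _ (hp i)] at hGI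
    refine (IntegrableOn.congr_fun (hGI.const_mul (1 / (p i : ℂ) ^ (s / 2 - 1)))
      (fun t (ht : 0 < t) ↦ ?_) measurableSet_Ioi).const_mul _
    simp_rw [mul_comm (↑(rexp _) : ℂ), ← mul_assoc, neg_mul, ofReal_mul]
    rw [mul_cpow_ofReal_nonneg (hp i).le ht.le, ← mul_assoc, one_div, inv_mul_cancel₀, one_mul]
    rw [Ne, cpow_eq_zero_iff, not_and_or]
    exact Or.inl (ofReal_ne_zero.mpr (hp i).ne')
  have hGsum : Summable fun i ↦ ∫ t in Set.Ioi (0 : ℝ), ‖G i t‖ := by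
    apply Summable.of_norm
    convert h_sum.mul_left (Real.Gamma (s / 2).re) using 2 with i
    show ‖∫ t in Ioi (0 : ℝ), ‖(t : ℂ) ^ (s / 2 - 1) * (a i * ((rexp (-p i * t) : ℝ) : ℂ))‖‖ = _
    simp_rw [← mul_assoc, mul_comm _ (a i), mul_assoc, norm_mul (a i), integral_const_mul]
    rw [← mul_div_assoc, mul_comm (Real.Gamma _), mul_div_assoc, norm_mul ‖a i‖, norm_norm]
    congr 1
    have hri := Real.integral_rpow_mul_exp_neg_mul_Ioi hs2 (hp i)
    simp_rw [← neg_mul (p i), one_div, inv_rpow (hp i).le, ← div_eq_inv_mul] at hri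
    rw [norm_of_nonneg (integral_nonneg (fun _ ↦ norm_nonneg _)), ← hri]
    refine setIntegral_congr_fun measurableSet_Ioi (fun t ht ↦ ?_)
    rw [norm_mul, norm_real, Real.norm_eq_abs, Real.abs_exp,
      norm_cpow_eq_rpow_re_of_pos ht, sub_re, one_re]
    rfl
  have hfe : ∀ y : ℝ, ((y : ℂ) ^ (s / 2 - 1) *
      ∑' n : ℕ, ν ((n + 1 : ℕ) : ZMod N) *
        ((Real.exp (-Real.pi * ((n : ℝ) + 1) ^ 2 * y / N) : ℝ) : ℂ)) = ∑' i, G i y := by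
    intro y
    rw [← tsum_mul_left]
    refine tsum_congr fun n ↦ ?_
    simp only [hGdef, ha]
    rw [hexp]
  have hmel : mellin F (s / 2) = ∫ y in Set.Ioi (0 : ℝ), ∑' i, G i y := by
    rw [mellin]
    refine setIntegral_congr_fun measurableSet_Ioi fun y _ ↦ ?_
    rw [smul_eq_mul]
    exact hfe y
  constructor
  · have h_int := aux_integrable_tsum (F := G) (μ := volume.restrict (Set.Ioi 0)) hGint hGsum
    exact IntegrableOn.congr_fun h_int (fun y _ ↦ (hfe y).symm) measurableSet_Ioi
  · simp_rw [hfe]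
    rw [← hmel, ← H.tsum_eq, ← tsum_mul_left]
    refine tsum_congr fun n ↦ ?_
    simp only [ha]
    have hcast : ((p n : ℝ) : ℂ) = ((π / N : ℝ) : ℂ) * (((((n : ℝ) + 1) ^ 2 : ℝ)) : ℂ) := by
      simp only [hpdef]; push_cast; ring
    have hpiN : (0 : ℝ) ≤ π / N := by positivity
    have hb : ((((n : ℝ) + 1) : ℝ) : ℂ) = ((n + 1 : ℕ) : ℂ) := by push_cast; ring
    have hsq : (((((n : ℝ) + 1) ^ 2 : ℝ)) : ℂ) ^ (s / 2) = ((n + 1 : ℕ) : ℂ) ^ s := by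
      rw [Complex.ofReal_pow, ← Complex.cpow_nat_mul' (n := 2) ?_ ?_ (s / 2)]
      · rw [hb]
        congr 1
        push_cast
        ring
      · rw [Complex.arg_ofReal_of_nonneg (by positivity)]
        simpa using Real.pi_pos
      · rw [Complex.arg_ofReal_of_nonneg (by positivity)]
        simpa using Real.pi_pos.le
    rw [hcast, mul_cpow_ofReal_nonneg hpiN (by positivity), hsq, Complex.cpow_neg,
      Complex.cpow_neg, div_eq_mul_inv, mul_inv]
    ring
end

section
/- Let N > 1 and let ν be a primitive even Dirichlet character modulo N with values in ℂ (even means ν(−1) = 1). Then for every real y > 0, ∑_{n∈ℤ} ν(n)·exp(−πn²/(Ny)) = (√y · τ(ν)/√N) · ∑_{n∈ℤ} conj(ν(n))·exp(−πn²y/N), where τ(ν) = ∑_{m=0}^{N−1} ν(m)·e^{2πim/N} is the Gauss sum of ν. -/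
open Complex Finset Real

/-- Modular transformation of the ϑ-series of a primitive even Dirichlet character under
`y → 1/y`: `ϑ(i/y, ν) = (√y τ(ν)/√N) ϑ(iy, conj ν)`, with `τ(ν)` the Gauss sum. -/
theorem stmt10 (N : ℕ) (hN : 1 < N) (ν : DirichletCharacter ℂ N)
    (hprim : ν.IsPrimitive) (heven : ν (-1) = 1) (y : ℝ) (hy : 0 < y) :
    ∑' n : ℤ, ν (n : ZMod N) * ((Real.exp (-Real.pi * (n : ℝ) ^ 2 / (N * y)) : ℝ) : ℂ)
      = (Real.sqrt y : ℂ) *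
          (∑ m ∈ Finset.range N, ν (m : ZMod N) *
            Complex.exp (2 * Real.pi * Complex.I * m / N)) / (Real.sqrt N : ℂ) *
        ∑' n : ℤ, (starRingEnd ℂ) (ν (n : ZMod N)) *
          ((Real.exp (-Real.pi * (n : ℝ) ^ 2 * y / N) : ℝ) : ℂ) := by
  haveI : NeZero N := ⟨by omega⟩
  have hNR : (0:ℝ) < (N:ℝ) := by exact_mod_cast Nat.pos_of_ne_zero (by omega)
  have hNne : (N:ℂ) ≠ 0 := by exact_mod_cast hNR.ne'
  have hyne : (y:ℂ) ≠ 0 := by exact_mod_cast hy.ne'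
  have hyc : (0:ℝ) < y / N := div_pos hy hNR
  -- summability of real Gaussians
  have hsum1 : ∀ c : ℝ, 0 < c → Summable (fun n : ℤ => Real.exp (-π * c * (n:ℝ)^2)) := by
    intro c hc
    have := summable_pow_mul_jacobiTheta₂_term_bound 0 hc 0
    simpa [mul_assoc] using this
  -- the Gauss sum
  set τg : ℂ := gaussSum ν ZMod.stdAddChar with hτgdef
  -- the finite sum in the statement equals the Gauss sum
  have hτ : (∑ m ∈ Finset.range N, ν (m : ZMod N) * Complex.exp (2 * ↑π * Complex.I * m / N))
      = τg := by
    rw [hτgdef, gaussSum]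
    refine Finset.sum_nbij' (fun m => (m : ZMod N)) (fun a => a.val) ?_ ?_ ?_ ?_ ?_
    · intro m _; exact Finset.mem_univ _
    · intro a _; exact Finset.mem_range.mpr a.val_lt
    · intro m hm; exact ZMod.val_cast_of_lt (Finset.mem_range.mp hm)
    · intro a _; exact ZMod.natCast_zmod_val a
    · intro m _
      congr 1
      symm
      show ZMod.stdAddChar ((m : ℕ) : ZMod N) = Complex.exp (2 * (π:ℂ) * Complex.I * m / N)
      rw [show ((m : ℕ) : ZMod N) = ((m : ℤ) : ZMod N) by push_cast; rfl, ZMod.stdAddChar_coe]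
      push_cast
      rfl
  -- Gauss sum expansion of conjugate character values
  have hA : ∀ n : ℤ, (starRingEnd ℂ) (ν (n : ZMod N)) * τg
      = ∑ a : ZMod N, ν a * ZMod.stdAddChar (((-n : ℤ) : ZMod N) * a) := by
    intro n
    have h1 := gaussSum_mulShift_of_isPrimitive ZMod.stdAddChar hprim (((-n : ℤ) : ZMod N))
    have h2 : gaussSum ν (ZMod.stdAddChar.mulShift ((-n : ℤ) : ZMod N))
        = ∑ a : ZMod N, ν a * ZMod.stdAddChar (((-n : ℤ) : ZMod N) * a) := by
      simp [gaussSum, AddChar.mulShift_apply]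
    have h3 : ν⁻¹ (((-n : ℤ) : ZMod N)) = (starRingEnd ℂ) (ν (n : ZMod N)) := by
      have e1 : ((-n : ℤ) : ZMod N) = (-1 : ZMod N) * ((n : ℤ) : ZMod N) := by push_cast; ring
      rw [e1, map_mul, ← MulChar.star_apply' ν, ← MulChar.star_apply' ν, heven]
      simp [RCLike.star_def]
    rw [← h2, h1, h3]
  -- the sums of shifted Gaussians, indexed by residue classes
  set G : ZMod N → ℂ := fun a =>
    ∑' n : ℤ, ((Real.exp (-π * ((n * N + (a.val : ℤ) : ℤ) : ℝ)^2 / (N * y)) : ℝ) : ℂ) with hGdef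
  -- inner Poisson-type evaluation
  have step_inner : ∀ a : ZMod N,
      (∑' n : ℤ, ZMod.stdAddChar (((-n : ℤ) : ZMod N) * a)
          * ((Real.exp (-π * (n:ℝ)^2 * y / N) : ℝ) : ℂ))
        = (1 / ((y/N : ℝ) : ℂ) ^ (1/2 : ℂ)) * G a := by
    intro a
    have hb := Complex.tsum_exp_neg_quadratic (a := ((y/N : ℝ) : ℂ))
      (by simpa using hyc) (-Complex.I * (a.val : ℂ) / (N:ℂ))
    calc ∑' n : ℤ, ZMod.stdAddChar (((-n : ℤ) : ZMod N) * a)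
            * ((Real.exp (-π * (n:ℝ)^2 * y / N) : ℝ) : ℂ)
        = ∑' n : ℤ, Complex.exp (-(π:ℂ) * ((y/N : ℝ) : ℂ) * (n:ℂ)^2
            + 2 * (π:ℂ) * (-Complex.I * (a.val : ℂ) / (N:ℂ)) * (n:ℂ)) := by
          refine tsum_congr fun n => ?_
          have e1 : (((-n : ℤ) : ZMod N) * a) = (((-n * a.val : ℤ)) : ZMod N) := by
            push_cast [ZMod.natCast_zmod_val]; ring
          rw [e1, ZMod.stdAddChar_coe, Complex.ofReal_exp, ← Complex.exp_add]
          congr 1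
          push_cast
          field_simp
          ring
      _ = 1 / ((y/N : ℝ) : ℂ) ^ (1/2 : ℂ) * ∑' n : ℤ,
            Complex.exp (-(π:ℂ) / ((y/N : ℝ) : ℂ)
              * ((n:ℂ) + Complex.I * (-Complex.I * (a.val:ℂ) / (N:ℂ)))^2) := hb
      _ = (1 / ((y/N : ℝ) : ℂ) ^ (1/2 : ℂ)) * G a := by
          congr 1
          refine tsum_congr fun n => ?_
          rw [Complex.ofReal_exp]
          congr 1
          have hI : Complex.I * (-Complex.I * (a.val:ℂ) / (N:ℂ)) = (a.val:ℂ) / (N:ℂ) := by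
            rw [show Complex.I * (-Complex.I * (a.val:ℂ) / (N:ℂ))
                = -(Complex.I * Complex.I) * ((a.val:ℂ) / (N:ℂ)) by ring, Complex.I_mul_I]
            ring
          rw [hI]
          push_cast
          field_simp
  -- summability for the sum interchange
  have hsumm2 : ∀ a : ZMod N, Summable (fun n : ℤ =>
      ν a * (ZMod.stdAddChar (((-n : ℤ) : ZMod N) * a)
        * ((Real.exp (-π * (n:ℝ)^2 * y / N) : ℝ) : ℂ))) := by
    intro a
    apply Summable.mul_left
    refine Summable.of_norm_bounded (hsum1 (y/N) hyc) fun n => ?_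
    rw [norm_mul]
    have h1 : ‖ZMod.stdAddChar (((-n : ℤ) : ZMod N) * a)‖ = 1 := by
      rw [ZMod.stdAddChar_apply, Circle.norm_coe]
    rw [h1, one_mul, Complex.norm_real, Real.norm_eq_abs, abs_of_pos (Real.exp_pos _)]
    refine le_of_eq ?_
    congr 1
    ring
  -- summability of the LHS
  have hFsumm : Summable (fun k : ℤ =>
      ν (k : ZMod N) * ((Real.exp (-π * (k:ℝ)^2 / (N * y)) : ℝ) : ℂ)) := by
    refine Summable.of_norm_bounded (hsum1 (1/(N*y)) (by positivity)) fun k => ?_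
    rw [norm_mul, Complex.norm_real, Real.norm_eq_abs, abs_of_pos (Real.exp_pos _)]
    calc ‖ν (k : ZMod N)‖ * Real.exp (-π * (k:ℝ)^2 / (N*y))
        ≤ 1 * Real.exp (-π * (k:ℝ)^2 / (N*y)) := by
          gcongr; exact ν.norm_le_one _
      _ = Real.exp (-π * (1/(N*y)) * (k:ℝ)^2) := by rw [one_mul]; congr 1; ring
  -- residue-class decomposition of the LHS
  have hL : (∑' n : ℤ, ν (n : ZMod N) * ((Real.exp (-π * (n:ℝ)^2 / (N * y)) : ℝ) : ℂ))
      = ∑ a : ZMod N, ν a * G a := by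
    set F : ℤ → ℂ := fun k => ν (k : ZMod N) * ((Real.exp (-π * (k:ℝ)^2 / (N * y)) : ℝ) : ℂ)
      with hFdef
    have h1 : ∀ k : ℤ, F k = ∑ a : ZMod N, Set.indicator {k : ℤ | (k : ZMod N) = a} F k := by
      intro k
      simp only [Set.indicator_apply, Set.mem_setOf_eq, Finset.sum_ite_eq, Finset.mem_univ,
        if_true]
    calc ∑' k : ℤ, F k
        = ∑' k : ℤ, ∑ a : ZMod N, Set.indicator {k : ℤ | (k : ZMod N) = a} F k :=
          tsum_congr h1
      _ = ∑ a : ZMod N, ∑' k : ℤ, Set.indicator {k : ℤ | (k : ZMod N) = a} F k :=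
          Summable.tsum_finsetSum fun a _ => hFsumm.indicator _
      _ = ∑ a : ZMod N, ν a * G a := by
          refine Finset.sum_congr rfl fun a _ => ?_
          have hinj : Function.Injective (fun n : ℤ => n * N + (a.val : ℤ)) := by
            intro m n h
            simp only at h
            have hNZ : (N:ℤ) ≠ 0 := by exact_mod_cast (by omega : N ≠ 0)
            have := add_right_cancel h
            exact mul_right_cancel₀ hNZ this
          have hsupp : Function.support (Set.indicator {k : ℤ | (k : ZMod N) = a} F)
              ⊆ Set.range (fun n : ℤ => n * N + (a.val : ℤ)) := by
            intro k hk
            have hk' : (k : ZMod N) = a := by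
              by_contra h
              have hnm : k ∉ {k : ℤ | (k : ZMod N) = a} := h
              exact hk (Set.indicator_of_notMem hnm F)
            have hz : ((k - (a.val : ℤ) : ℤ) : ZMod N) = 0 := by
              push_cast
              rw [hk', ZMod.natCast_zmod_val]
              ring
            obtain ⟨q, hq⟩ := (ZMod.intCast_zmod_eq_zero_iff_dvd _ _).mp hz
            exact ⟨q, by linear_combination -hq⟩
          rw [← Function.Injective.tsum_eq hinj hsupp]
          calc ∑' n : ℤ, Set.indicator {k : ℤ | (k : ZMod N) = a} F (n * N + (a.val : ℤ))
              = ∑' n : ℤ, ν a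
                  * ((Real.exp (-π * ((n * N + (a.val : ℤ) : ℤ) : ℝ)^2 / (N * y)) : ℝ) : ℂ) := by
                refine tsum_congr fun n => ?_
                have hcast : ((n * N + (a.val : ℤ) : ℤ) : ZMod N) = a := by
                  push_cast [ZMod.natCast_zmod_val]
                  simp
                have hm : (n * N + (a.val : ℤ) : ℤ) ∈ {k : ℤ | (k : ZMod N) = a} := hcast
                rw [Set.indicator_of_mem hm F, hFdef]
                simp only
                rw [hcast]
            _ = ν a * G a := tsum_mul_left
  -- the key identity
  have key : τg * (∑' n : ℤ, (starRingEnd ℂ) (ν (n : ZMod N))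
        * ((Real.exp (-π * (n:ℝ)^2 * y / N) : ℝ) : ℂ))
      = (1 / ((y/N : ℝ) : ℂ) ^ (1/2 : ℂ)) * ∑ a : ZMod N, ν a * G a := by
    rw [← tsum_mul_left]
    calc ∑' n : ℤ, τg * ((starRingEnd ℂ) (ν (n : ZMod N))
            * ((Real.exp (-π * (n:ℝ)^2 * y / N) : ℝ) : ℂ))
        = ∑' n : ℤ, ∑ a : ZMod N, ν a * (ZMod.stdAddChar (((-n : ℤ) : ZMod N) * a)
            * ((Real.exp (-π * (n:ℝ)^2 * y / N) : ℝ) : ℂ)) := by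
          refine tsum_congr fun n => ?_
          rw [← mul_assoc, mul_comm τg, hA n, Finset.sum_mul]
          exact Finset.sum_congr rfl fun a _ => by ring
      _ = ∑ a : ZMod N, ∑' n : ℤ, ν a * (ZMod.stdAddChar (((-n : ℤ) : ZMod N) * a)
            * ((Real.exp (-π * (n:ℝ)^2 * y / N) : ℝ) : ℂ)) := Summable.tsum_finsetSum fun a _ => hsumm2 a
      _ = ∑ a : ZMod N, ν a * ((1 / ((y/N : ℝ) : ℂ) ^ (1/2 : ℂ)) * G a) := by
          refine Finset.sum_congr rfl fun a _ => ?_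
          rw [tsum_mul_left, step_inner a]
      _ = (1 / ((y/N : ℝ) : ℂ) ^ (1/2 : ℂ)) * ∑ a : ZMod N, ν a * G a := by
          rw [Finset.mul_sum]
          exact Finset.sum_congr rfl fun a _ => by ring
  -- compute the square root factor
  have hsqrt : ((y/N : ℝ) : ℂ) ^ (1/2 : ℂ) = ((Real.sqrt y / Real.sqrt N : ℝ) : ℂ) := by
    rw [show ((1:ℂ)/2) = ((1/2 : ℝ) : ℂ) by norm_num, ← Complex.ofReal_cpow hyc.le]
    rw [← Real.sqrt_eq_rpow, Real.sqrt_div hy.le]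
  have hsne : ((Real.sqrt y / Real.sqrt N : ℝ) : ℂ) ≠ 0 := by
    rw [Complex.ofReal_ne_zero]
    positivity
  -- final assembly
  rw [hτ, hL]
  have hfin : (Real.sqrt y : ℂ) * τg / (Real.sqrt N : ℂ)
        * (∑' n : ℤ, (starRingEnd ℂ) (ν (n : ZMod N))
          * ((Real.exp (-π * (n:ℝ)^2 * y / N) : ℝ) : ℂ))
      = ((Real.sqrt y / Real.sqrt N : ℝ) : ℂ)
        * (τg * ∑' n : ℤ, (starRingEnd ℂ) (ν (n : ZMod N))
          * ((Real.exp (-π * (n:ℝ)^2 * y / N) : ℝ) : ℂ)) := by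
    push_cast
    ring
  rw [hfin, key, hsqrt]
  rw [← mul_assoc, mul_one_div, div_self hsne, one_mul]
end

section
/- Let N > 1 and let ν be a primitive even Dirichlet character modulo N with values in ℂ (even means ν(−1) = 1). Define Θ(y) = ∑_{n∈ℤ} ν(n)·exp(−πn²y/N) and Θ̄(y) = ∑_{n∈ℤ} conj(ν(n))·exp(−πn²y/N) for y > 0, and set G(y) = ∫_0^∞ Θ(y·y')·Θ̄(y/y') dy'/y'. Then the integral defining G(y) converges for every y > 0, and G(1/y) = y·G(y) for every y > 0. -/
open MeasureTheory Complex

noncomputable section Stmt12Aux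

/-- Residue/quotient decomposition of `ℤ`. -/
def zmodIntEquiv (N : ℕ) [NeZero N] : ZMod N × ℤ ≃ ℤ where
  toFun p := N * p.2 + ((p.1.val : ℤ))
  invFun n := ((n : ZMod N), (n - ((n : ZMod N).val : ℤ)) / N)
  left_inv := by
    rintro ⟨j, q⟩
    have hN : (N : ℤ) ≠ 0 := Int.natCast_ne_zero.mpr (NeZero.ne N)
    have h1 : (((N : ℤ) * q + (j.val : ℤ) : ℤ) : ZMod N) = j := by
      push_cast
      simp [ZMod.natCast_self, ZMod.natCast_val, ZMod.cast_id]
    have h2 : ((N : ℤ) * q + (j.val : ℤ) -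
        (((((N : ℤ) * q + (j.val : ℤ) : ℤ) : ZMod N)).val : ℤ)) / N = q := by
      rw [h1, add_sub_cancel_right, Int.mul_ediv_cancel_left q hN]
    exact Prod.ext h1 h2
  right_inv := by
    intro n
    have hN : (N : ℤ) ≠ 0 := Int.natCast_ne_zero.mpr (NeZero.ne N)
    have hv : (((n : ZMod N)).val : ℤ) = n % N := ZMod.val_intCast n
    show (N : ℤ) * ((n - (((n : ZMod N)).val : ℤ)) / N) + (((n : ZMod N)).val : ℤ) = n
    rw [hv]
    have h3 : n - n % N = N * (n / N) := by
      have := Int.mul_ediv_add_emod n N; linarith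
    rw [h3, Int.mul_ediv_cancel_left _ hN]
    have := Int.mul_ediv_add_emod n N; linarith

lemma tsum_int_classes {N : ℕ} [NeZero N] (f : ℤ → ℂ) (hf : Summable f) :
    ∑' n : ℤ, f n = ∑ j : ZMod N, ∑' q : ℤ, f (N * q + (j.val : ℤ)) := by
  have hN : (N : ℤ) ≠ 0 := Int.natCast_ne_zero.mpr (NeZero.ne N)
  have hinj : ∀ j : ZMod N, Function.Injective (fun q : ℤ => (N : ℤ) * q + (j.val : ℤ)) := by
    intro j a b hab
    simp only at hab
    exact mul_left_cancel₀ hN (by linarith)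
  have he : Summable (f ∘ (zmodIntEquiv N)) := (Equiv.summable_iff _).mpr hf
  have h0 : ∑' n : ℤ, f n = ∑' p : ZMod N × ℤ, (f ∘ (zmodIntEquiv N)) p :=
    (Equiv.tsum_eq (zmodIntEquiv N) f).symm
  rw [h0, he.tsum_prod' (fun j => hf.comp_injective (hinj j)), tsum_fintype]
  rfl

lemma summable_exp_int {c : ℝ} (hc : 0 < c) :
    Summable fun n : ℤ => Real.exp (-c * (n : ℝ) ^ 2) := by
  have hkey : ∀ n : ℕ, Real.exp (-c * (n : ℝ) ^ 2) ≤ Real.exp (-c) ^ n := by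
    intro n
    rw [← Real.exp_nat_mul]
    apply Real.exp_le_exp.mpr
    have h1 : (n : ℝ) ≤ (n : ℝ) ^ 2 := by
      exact_mod_cast Nat.le_self_pow (by norm_num : (2 : ℕ) ≠ 0) n
    nlinarith [mul_le_mul_of_nonneg_left h1 hc.le]
  have hgeo : Summable fun n : ℕ => Real.exp (-c) ^ n :=
    summable_geometric_of_lt_one (Real.exp_pos _).le
      (by rw [← Real.exp_zero]; exact Real.exp_lt_exp.mpr (by linarith))
  apply Summable.of_nat_of_neg
  · exact Summable.of_nonneg_of_le (fun n => (Real.exp_pos _).le) hkey hgeo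
  · refine Summable.of_nonneg_of_le (fun n => (Real.exp_pos _).le) (fun n => ?_) hgeo
    have : ((-(n : ℤ) : ℤ) : ℝ) ^ 2 = (n : ℝ) ^ 2 := by push_cast; ring
    rw [this]
    exact hkey n

lemma summable_term {N : ℕ} [NeZero N] (ν : DirichletCharacter ℂ N) {x : ℝ} (hx : 0 < x) :
    Summable fun n : ℤ =>
      ν (n : ZMod N) * ((Real.exp (-Real.pi * (n : ℝ) ^ 2 * x / N) : ℝ) : ℂ) := by
  have hN : (0 : ℝ) < N := by
    have := NeZero.pos N; exact_mod_cast this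
  have hc : 0 < Real.pi * x / N := by positivity
  apply Summable.of_norm
  refine Summable.of_nonneg_of_le (fun n => norm_nonneg _) (fun n => ?_) (summable_exp_int hc)
  rw [norm_mul, Complex.norm_real, Real.norm_eq_abs, abs_of_pos (Real.exp_pos _)]
  have h1 : -Real.pi * (n : ℝ) ^ 2 * x / N = -(Real.pi * x / N) * (n : ℝ) ^ 2 := by ring
  rw [h1]
  exact mul_le_of_le_one_left (Real.exp_pos _).le (ν.norm_le_one _)

lemma summable_norm_term {N : ℕ} [NeZero N] (ν : DirichletCharacter ℂ N) {x : ℝ} (hx : 0 < x) :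
    Summable fun n : ℤ =>
      ‖ν (n : ZMod N) * ((Real.exp (-Real.pi * (n : ℝ) ^ 2 * x / N) : ℝ) : ℂ)‖ := by
  have hN : (0 : ℝ) < N := by
    have := NeZero.pos N; exact_mod_cast this
  have hc : 0 < Real.pi * x / N := by positivity
  refine Summable.of_nonneg_of_le (fun n => norm_nonneg _) (fun n => ?_) (summable_exp_int hc)
  rw [norm_mul, Complex.norm_real, Real.norm_eq_abs, abs_of_pos (Real.exp_pos _)]
  have h1 : -Real.pi * (n : ℝ) ^ 2 * x / N = -(Real.pi * x / N) * (n : ℝ) ^ 2 := by ring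
  rw [h1]
  exact mul_le_of_le_one_left (Real.exp_pos _).le (ν.norm_le_one _)


lemma gauss_conj_mul {N : ℕ} [NeZero N] (hN : 1 < N) (ν : DirichletCharacter ℂ N)
    (hprim : ν.IsPrimitive) :
    gaussSum ν (ZMod.stdAddChar) * (starRingEnd ℂ) (gaussSum ν (ZMod.stdAddChar)) = N := by
  haveI : Fact (1 < N) := ⟨hN⟩
  set e : AddChar (ZMod N) ℂ := ZMod.stdAddChar with he
  set τ : ℂ := gaussSum ν e with hτ
  have hRchar : 0 < ringChar (ZMod N) := by
    rw [ZMod.ringChar_zmod_n]; omega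
  have hA : ∀ a : ZMod N, ∑ j : ZMod N, ν j * e (a * j) = ν⁻¹ a * τ := by
    intro a
    have := gaussSum_mulShift_of_isPrimitive e hprim a
    rw [← this]
    simp [gaussSum, AddChar.mulShift_apply]
  -- the sum `c` of |ν j|²
  set c : ℂ := ∑ j : ZMod N, ν j * ν⁻¹ j with hc
  have hcre : c = ((∑ j : ZMod N, Complex.normSq (ν j) : ℝ) : ℂ) := by
    rw [hc]
    push_cast
    refine Finset.sum_congr rfl (fun j _ => ?_)
    rw [← MulChar.star_apply', RCLike.star_def, mul_comm]
    exact (Complex.normSq_eq_conj_mul_self).symm ▸ rfl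
  have hcne : c ≠ 0 := by
    rw [hcre]
    have h1 : (1 : ℝ) ≤ ∑ j : ZMod N, Complex.normSq (ν j) := by
      have : Complex.normSq (ν 1) = 1 := by rw [map_one]; simp
      calc (1 : ℝ) = Complex.normSq (ν 1) := this.symm
        _ ≤ ∑ j : ZMod N, Complex.normSq (ν j) :=
          Finset.single_le_sum (fun j _ => Complex.normSq_nonneg _) (Finset.mem_univ 1)
    simp only [ne_eq, Complex.ofReal_eq_zero]
    intro h; rw [h] at h1; linarith
  -- compute S := ∑ a, (gaussSum ν (e.mulShift a)) * conj (gaussSum ν (e.mulShift a)) two ways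
  have hway1 : ∑ a : ZMod N, ((∑ j : ZMod N, ν j * e (a * j)) *
      (starRingEnd ℂ) (∑ k : ZMod N, ν k * e (a * k))) = (τ * (starRingEnd ℂ) τ) * c := by
    have : ∀ a : ZMod N, ((∑ j : ZMod N, ν j * e (a * j)) *
        (starRingEnd ℂ) (∑ k : ZMod N, ν k * e (a * k)))
        = (τ * (starRingEnd ℂ) τ) * (ν⁻¹ a * ν a) := by
      intro a
      rw [hA a, map_mul]
      have : (starRingEnd ℂ) (ν⁻¹ a) = ν a := by
        have h1 : star (ν⁻¹ a) = ν⁻¹⁻¹ a := MulChar.star_apply' _ a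
        rw [RCLike.star_def] at h1
        rw [h1, inv_inv]
      rw [this]; ring
    rw [Finset.sum_congr rfl (fun a _ => this a), ← Finset.mul_sum, hc]
    congr 1
    exact Finset.sum_congr rfl (fun a _ => by ring)
  have hway2 : ∑ a : ZMod N, ((∑ j : ZMod N, ν j * e (a * j)) *
      (starRingEnd ℂ) (∑ k : ZMod N, ν k * e (a * k))) = (N : ℂ) * c := by
    have hexp : ∀ a : ZMod N, ((∑ j : ZMod N, ν j * e (a * j)) *
        (starRingEnd ℂ) (∑ k : ZMod N, ν k * e (a * k)))
        = ∑ j : ZMod N, ∑ k : ZMod N, ν j * (starRingEnd ℂ) (ν k) * e (a * (j - k)) := by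
      intro a
      rw [map_sum, Finset.sum_mul_sum]
      refine Finset.sum_congr rfl (fun j _ => Finset.sum_congr rfl (fun k _ => ?_))
      have harg : a * j + -(a * k) = a * (j - k) := by ring
      rw [map_mul (starRingEnd ℂ), AddChar.starComp_apply hRchar (a * k), AddChar.inv_apply,
        mul_mul_mul_comm, ← AddChar.map_add_eq_mul, harg]
    rw [Finset.sum_congr rfl (fun a _ => hexp a)]
    rw [Finset.sum_comm]
    have : ∀ j : ZMod N, ∑ a : ZMod N, ∑ k : ZMod N, ν j * (starRingEnd ℂ) (ν k) * e (a * (j - k))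
        = ∑ k : ZMod N, ν j * (starRingEnd ℂ) (ν k) * ∑ a : ZMod N, e (a * (j - k)) := by
      intro j
      rw [Finset.sum_comm]
      exact Finset.sum_congr rfl (fun k _ => by rw [Finset.mul_sum])
    rw [Finset.sum_congr rfl (fun j _ => this j)]
    have hps : ∀ j k : ZMod N, ∑ a : ZMod N, e (a * (j - k))
        = if j - k = 0 then (N : ℂ) else 0 := by
      intro j k
      have := AddChar.sum_mulShift (j - k) (ZMod.isPrimitive_stdAddChar N)
      rw [he, this]
      split <;> simp [ZMod.card]
    have : ∀ j : ZMod N, ∑ k : ZMod N, ν j * (starRingEnd ℂ) (ν k) * ∑ a : ZMod N, e (a * (j - k))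
        = (N : ℂ) * (ν j * (starRingEnd ℂ) (ν j)) := by
      intro j
      rw [Finset.sum_congr rfl (fun k _ => by rw [hps j k])]
      rw [Finset.sum_eq_single j]
      · rw [if_pos (sub_self j)]; ring
      · intro k _ hk
        rw [if_neg (by simpa [sub_eq_zero] using (Ne.symm hk)), mul_zero]
      · intro h; exact absurd (Finset.mem_univ j) h
    rw [Finset.sum_congr rfl (fun j _ => this j), ← Finset.mul_sum, hc]
    congr 1
    refine Finset.sum_congr rfl (fun j _ => ?_)
    have h1 : star (ν j) = ν⁻¹ j := MulChar.star_apply' _ j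
    rw [RCLike.star_def] at h1
    rw [h1]
  have := hway1.symm.trans hway2
  exact mul_right_cancel₀ hcne this


lemma theta_fe {N : ℕ} [NeZero N] (hN : 1 < N) (ν : DirichletCharacter ℂ N)
    (hprim : ν.IsPrimitive) (heven : ν (-1) = 1) {y : ℝ} (hy : 0 < y) :
    (∑' n : ℤ, ν (n : ZMod N) * ((Real.exp (-Real.pi * (n : ℝ) ^ 2 * (1 / y) / N) : ℝ) : ℂ))
      = ((Real.sqrt (y / N) : ℝ) : ℂ) * gaussSum ν (ZMod.stdAddChar) *
        ∑' n : ℤ, (starRingEnd ℂ) (ν (n : ZMod N)) *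
          ((Real.exp (-Real.pi * (n : ℝ) ^ 2 * y / N) : ℝ) : ℂ) := by
  have hNR : (0 : ℝ) < N := by exact_mod_cast Nat.pos_of_ne_zero (NeZero.ne N)
  have hNne : (N : ℝ) ≠ 0 := ne_of_gt hNR
  have hNneC : (N : ℂ) ≠ 0 := by exact_mod_cast (ne_of_gt hNR)
  have hyne : y ≠ 0 := ne_of_gt hy
  set τ : ℂ := gaussSum ν (ZMod.stdAddChar) with hτ
  set a : ℂ := ((y / N : ℝ) : ℂ) with ha
  have hare : 0 < a.re := by rw [ha, Complex.ofReal_re]; positivity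
  have hane : a ≠ 0 := by
    rw [ha]
    exact_mod_cast ne_of_gt (div_pos hy hNR)
  set A : ℂ := a ^ (1 / 2 : ℂ) with hA
  have hAne : A ≠ 0 := by
    rw [hA]
    intro h
    rcases (Complex.cpow_eq_zero_iff a _).mp h with ⟨h1, _⟩
    exact hane h1
  have hy1 : 0 < 1 / y := by positivity
  set f : ℤ → ℂ := fun n =>
    ν (n : ZMod N) * ((Real.exp (-Real.pi * (n : ℝ) ^ 2 * (1 / y) / N) : ℝ) : ℂ) with hf
  have hfs : Summable f := summable_term ν hy1
  -- abbreviations for the Fourier side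
  set R : ℤ → ℂ := fun m => ((Real.exp (-Real.pi * (m : ℝ) ^ 2 * y / N) : ℝ) : ℂ) with hR
  set b : ZMod N → ℂ := fun j => -(Complex.I * ((j.val : ℕ) : ℂ) / N) with hb
  set c : ZMod N → ℤ → ℂ := fun j m =>
    Complex.exp (2 * (Real.pi : ℂ) * b j * (m : ℂ)) with hc
  have hcnorm : ∀ j m, ‖c j m‖ = 1 := by
    intro j m
    have h1 : 2 * (Real.pi : ℂ) * b j * (m : ℂ)
        = ((-(2 * Real.pi * (j.val : ℝ) * (m : ℝ) / N) : ℝ) : ℂ) * Complex.I := by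
      rw [hb]; push_cast; ring
    rw [hc]
    simp only [h1]
    exact Complex.norm_exp_ofReal_mul_I _
  have hRsum : ∀ j : ZMod N, Summable (fun m : ℤ => ν j * (R m * c j m)) := by
    intro j
    apply Summable.of_norm
    have base : Summable (fun m : ℤ => Real.exp (-(Real.pi * y / N) * (m : ℝ) ^ 2)) :=
      summable_exp_int (by positivity)
    refine Summable.of_nonneg_of_le (fun m => norm_nonneg _) (fun m => ?_)
      (base.mul_left ‖ν j‖)
    rw [norm_mul, norm_mul, hcnorm j m, mul_one, hR]
    simp only [Complex.norm_real, Real.norm_eq_abs, abs_of_pos (Real.exp_pos _)]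
    have : -Real.pi * (m : ℝ) ^ 2 * y / N = -(Real.pi * y / N) * (m : ℝ) ^ 2 := by ring
    rw [this]
  -- inner class sums via Poisson summation
  have hinner : ∀ j : ZMod N, ∑' q : ℤ, f ((N : ℤ) * q + (j.val : ℤ))
      = ν j * (A * ∑' m : ℤ, Complex.exp
          (-(Real.pi : ℂ) * a * (m : ℂ) ^ 2 + 2 * (Real.pi : ℂ) * b j * (m : ℂ))) := by
    intro j
    have key := Complex.tsum_exp_neg_quadratic hare (b j)
    have hIb : Complex.I * b j = ((j.val : ℕ) : ℂ) / N := by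
      rw [hb, mul_neg, ← mul_div_assoc, ← mul_assoc, Complex.I_mul_I]
      ring
    have hterm : ∀ q : ℤ, f ((N : ℤ) * q + (j.val : ℤ))
        = ν j * Complex.exp (-(Real.pi : ℂ) / a * ((q : ℂ) + Complex.I * b j) ^ 2) := by
      intro q
      have hcast : ((((N : ℤ) * q + (j.val : ℤ) : ℤ)) : ZMod N) = j := by
        push_cast
        simp [ZMod.natCast_self, ZMod.natCast_val, ZMod.cast_id]
      have hyC : (y : ℂ) ≠ 0 := by exact_mod_cast hyne
      rw [hf]
      simp only
      rw [hcast]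
      congr 1
      have hqb : (q : ℂ) + Complex.I * b j = (((q : ℝ) + (j.val : ℝ) / N : ℝ) : ℂ) := by
        rw [hIb]; push_cast; ring
      rw [Complex.ofReal_exp, hqb, ha]
      congr 1
      rw [show -(Real.pi : ℂ) = ((-Real.pi : ℝ) : ℂ) from by push_cast; ring]
      rw [← Complex.ofReal_div, ← Complex.ofReal_pow, ← Complex.ofReal_mul,
        Complex.ofReal_inj]
      push_cast
      field_simp
    have hS2 : ∑' q : ℤ, Complex.exp (-(Real.pi : ℂ) / a * ((q : ℂ) + Complex.I * b j) ^ 2)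
        = A * ∑' m : ℤ, Complex.exp
            (-(Real.pi : ℂ) * a * (m : ℂ) ^ 2 + 2 * (Real.pi : ℂ) * b j * (m : ℂ)) := by
      rw [key, hA, ← mul_assoc]
      rw [mul_one_div, div_self hAne, one_mul]
    rw [tsum_congr hterm, tsum_mul_left, hS2]
  -- gauss sum evaluation
  have hgauss : ∀ m : ℤ, ∑ j : ZMod N, ν j * c j m = (starRingEnd ℂ) (ν (m : ZMod N)) * τ := by
    intro m
    have hchar : ∀ j : ZMod N,
        c j m = (ZMod.stdAddChar.mulShift (((-m : ℤ) : ZMod N))) j := by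
      intro j
      rw [AddChar.mulShift_apply]
      have hj : ((((-m) * (j.val : ℤ) : ℤ)) : ZMod N) = ((-m : ℤ) : ZMod N) * j := by
        push_cast
        simp [ZMod.natCast_val, ZMod.cast_id]
      rw [← hj, ZMod.stdAddChar_coe, hc]
      simp only [hb]
      congr 1
      push_cast
      ring
    have hgs : ∑ j : ZMod N, ν j * c j m
        = gaussSum ν (ZMod.stdAddChar.mulShift (((-m : ℤ) : ZMod N))) := by
      rw [gaussSum]
      exact Finset.sum_congr rfl (fun j _ => by rw [hchar j])
    rw [hgs, gaussSum_mulShift_of_isPrimitive _ hprim, ← hτ]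
    congr 1
    have h1 : ν⁻¹ (((-m : ℤ) : ZMod N)) = (starRingEnd ℂ) (ν (((-m : ℤ) : ZMod N))) := by
      rw [← MulChar.star_apply', RCLike.star_def]
    have h2 : ν (((-m : ℤ) : ZMod N)) = ν ((m : ℤ) : ZMod N) := by
      have : ((-m : ℤ) : ZMod N) = (-1 : ZMod N) * ((m : ℤ) : ZMod N) := by
        push_cast
        ring
      rw [this, map_mul, heven, one_mul]
    rw [h1, h2]
  -- assemble
  rw [tsum_int_classes (N := N) f hfs]
  have hsplit : ∀ j : ZMod N, ∀ m : ℤ,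
      Complex.exp (-(Real.pi : ℂ) * a * (m : ℂ) ^ 2 + 2 * (Real.pi : ℂ) * b j * (m : ℂ))
        = R m * c j m := by
    intro j m
    simp only [hR, hc]
    rw [Complex.exp_add, Complex.ofReal_exp]
    congr 2
    rw [ha]
    push_cast
    ring
  calc ∑ j : ZMod N, ∑' q : ℤ, f ((N : ℤ) * q + (j.val : ℤ))
      = ∑ j : ZMod N, ν j * (A * ∑' m : ℤ, Complex.exp
          (-(Real.pi : ℂ) * a * (m : ℂ) ^ 2 + 2 * (Real.pi : ℂ) * b j * (m : ℂ))) :=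
        Finset.sum_congr rfl (fun j _ => hinner j)
    _ = ∑ j : ZMod N, A * ∑' m : ℤ, ν j * (R m * c j m) := by
        refine Finset.sum_congr rfl (fun j _ => ?_)
        rw [tsum_congr (fun m : ℤ => hsplit j m)]
        have h1 : ∑' m : ℤ, ν j * (R m * c j m) = ν j * ∑' m : ℤ, R m * c j m :=
          tsum_mul_left
        rw [h1]
        ring
    _ = A * ∑ j : ZMod N, ∑' m : ℤ, ν j * (R m * c j m) := by rw [Finset.mul_sum]
    _ = A * ∑' m : ℤ, ∑ j : ZMod N, ν j * (R m * c j m) := by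
        rw [Summable.tsum_finsetSum (fun j _ => hRsum j)]
    _ = A * ∑' m : ℤ, ((starRingEnd ℂ) (ν (m : ZMod N)) * R m) * τ := by
        congr 1
        refine tsum_congr (fun m => ?_)
        have : ∑ j : ZMod N, ν j * (R m * c j m) = R m * ∑ j : ZMod N, ν j * c j m := by
          rw [Finset.mul_sum]
          exact Finset.sum_congr rfl (fun j _ => by ring)
        rw [this, hgauss m]
        ring
    _ = A * ((∑' m : ℤ, (starRingEnd ℂ) (ν (m : ZMod N)) * R m) * τ) := by
        rw [tsum_mul_right]
    _ = ((Real.sqrt (y / N) : ℝ) : ℂ) * τ *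
        ∑' n : ℤ, (starRingEnd ℂ) (ν (n : ZMod N)) *
          ((Real.exp (-Real.pi * (n : ℝ) ^ 2 * y / N) : ℝ) : ℂ) := by
        have hAsqrt : A = ((Real.sqrt (y / N) : ℝ) : ℂ) := by
          rw [hA, ha, Real.sqrt_eq_rpow]
          rw [Complex.ofReal_cpow (by positivity) (1 / 2)]
          norm_num
        rw [hAsqrt, hR]
        ring


lemma theta_decay {N : ℕ} [NeZero N] (hN : 1 < N) (ν : DirichletCharacter ℂ N)
    {ε : ℝ} (hε : 0 < ε) :
    ∃ C : ℝ, 0 ≤ C ∧ ∀ x : ℝ, ε ≤ x →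
      ‖∑' n : ℤ, ν (n : ZMod N) * ((Real.exp (-Real.pi * (n : ℝ) ^ 2 * x / N) : ℝ) : ℂ)‖
        ≤ C * Real.exp (-Real.pi * x / N) := by
  haveI : Fact (1 < N) := ⟨hN⟩
  have hNR : (0 : ℝ) < N := by exact_mod_cast Nat.pos_of_ne_zero (NeZero.ne N)
  set u : ℤ → ℝ := fun n =>
    ‖ν (n : ZMod N)‖ * Real.exp (-(Real.pi * ε / N) * ((n : ℝ) ^ 2 - 1)) with hu
  have hu0 : ∀ n, 0 ≤ u n := fun n => mul_nonneg (norm_nonneg _) (Real.exp_pos _).le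
  have husum : Summable u := by
    have base : Summable (fun n : ℤ => Real.exp (-(Real.pi * ε / N) * (n : ℝ) ^ 2)) :=
      summable_exp_int (by positivity)
    refine Summable.of_nonneg_of_le hu0 (fun n => ?_)
      ((base.mul_left (Real.exp (Real.pi * ε / N))))
    rw [hu]
    simp only
    have h1 : Real.exp (-(Real.pi * ε / N) * ((n : ℝ) ^ 2 - 1))
        = Real.exp (Real.pi * ε / N) * Real.exp (-(Real.pi * ε / N) * (n : ℝ) ^ 2) := by
      rw [← Real.exp_add]
      congr 1
      ring
    rw [h1]
    exact mul_le_of_le_one_left (by positivity) (ν.norm_le_one _)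
  refine ⟨∑' n : ℤ, u n, tsum_nonneg hu0, fun x hx => ?_⟩
  have hx0 : 0 < x := lt_of_lt_of_le hε hx
  have hterm : ∀ n : ℤ,
      ‖ν (n : ZMod N) * ((Real.exp (-Real.pi * (n : ℝ) ^ 2 * x / N) : ℝ) : ℂ)‖
        ≤ u n * Real.exp (-Real.pi * x / N) := by
    intro n
    rw [norm_mul, Complex.norm_real, Real.norm_eq_abs, abs_of_pos (Real.exp_pos _), hu]
    simp only
    rcases eq_or_ne n 0 with rfl | hn
    · have h0 : ((0 : ℤ) : ZMod N) = 0 := by push_cast; rfl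
      rw [h0, MulChar.map_nonunit ν (by simpa using not_isUnit_zero)]
      simp
    · have hsq : (1 : ℝ) ≤ (n : ℝ) ^ 2 := by
        have h1 : (1 : ℤ) ≤ n ^ 2 := by
          rcases lt_or_gt_of_ne hn with h | h <;> nlinarith
        exact_mod_cast h1
      have hEXP : Real.exp (-Real.pi * (n : ℝ) ^ 2 * x / N)
          ≤ Real.exp (-(Real.pi * ε / N) * ((n : ℝ) ^ 2 - 1)) * Real.exp (-Real.pi * x / N) := by
        rw [← Real.exp_add]
        apply Real.exp_le_exp.mpr
        have key : Real.pi * ε / N * ((n : ℝ) ^ 2 - 1)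
            ≤ Real.pi * x / N * ((n : ℝ) ^ 2 - 1) := by
          apply mul_le_mul_of_nonneg_right _ (by linarith)
          gcongr
        ring_nf at key ⊢
        linarith [key]
      calc ‖ν (n : ZMod N)‖ * Real.exp (-Real.pi * (n : ℝ) ^ 2 * x / N)
          ≤ ‖ν (n : ZMod N)‖ * (Real.exp (-(Real.pi * ε / N) * ((n : ℝ) ^ 2 - 1)) *
            Real.exp (-Real.pi * x / N)) :=
            mul_le_mul_of_nonneg_left hEXP (norm_nonneg _)
        _ = ‖ν (n : ZMod N)‖ * Real.exp (-(Real.pi * ε / N) * ((n : ℝ) ^ 2 - 1)) *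
            Real.exp (-Real.pi * x / N) := by ring
  calc ‖∑' n : ℤ, ν (n : ZMod N) * ((Real.exp (-Real.pi * (n : ℝ) ^ 2 * x / N) : ℝ) : ℂ)‖
      ≤ ∑' n : ℤ, ‖ν (n : ZMod N) * ((Real.exp (-Real.pi * (n : ℝ) ^ 2 * x / N) : ℝ) : ℂ)‖ :=
        norm_tsum_le_tsum_norm (summable_norm_term ν hx0)
    _ ≤ ∑' n : ℤ, u n * Real.exp (-Real.pi * x / N) :=
        Summable.tsum_le_tsum hterm (summable_norm_term ν hx0)
          (husum.mul_right _)
    _ = (∑' n : ℤ, u n) * Real.exp (-Real.pi * x / N) := tsum_mul_right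

lemma theta_continuousAt {N : ℕ} [NeZero N] (ν : DirichletCharacter ℂ N)
    {x : ℝ} (hx : 0 < x) :
    ContinuousAt (fun t : ℝ => ∑' n : ℤ,
      ν (n : ZMod N) * ((Real.exp (-Real.pi * (n : ℝ) ^ 2 * t / N) : ℝ) : ℂ)) x := by
  have hNR : (0 : ℝ) < N := by exact_mod_cast Nat.pos_of_ne_zero (NeZero.ne N)
  have h2 : 0 < x / 2 := by linarith
  set u : ℤ → ℝ := fun n => Real.exp (-(Real.pi * (x / 2) / N) * (n : ℝ) ^ 2) with hu
  have husum : Summable u := summable_exp_int (by positivity)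
  have hco : ContinuousOn (fun t : ℝ => ∑' n : ℤ,
      ν (n : ZMod N) * ((Real.exp (-Real.pi * (n : ℝ) ^ 2 * t / N) : ℝ) : ℂ))
      (Set.Ici (x / 2)) := by
    refine continuousOn_tsum (fun n => Continuous.continuousOn (by fun_prop)) husum
      (fun n t ht => ?_)
    rw [norm_mul, Complex.norm_real, Real.norm_eq_abs, abs_of_pos (Real.exp_pos _), hu]
    simp only
    have ht' : x / 2 ≤ t := ht
    calc ‖ν (n : ZMod N)‖ * Real.exp (-Real.pi * (n : ℝ) ^ 2 * t / N)
        ≤ 1 * Real.exp (-Real.pi * (n : ℝ) ^ 2 * t / N) :=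
          mul_le_mul_of_nonneg_right (ν.norm_le_one _) (Real.exp_pos _).le
      _ ≤ Real.exp (-(Real.pi * (x / 2) / N) * (n : ℝ) ^ 2) := by
          rw [one_mul]
          apply Real.exp_le_exp.mpr
          have hkey : Real.pi * (n : ℝ) ^ 2 / N * (x / 2) ≤ Real.pi * (n : ℝ) ^ 2 / N * t :=
            mul_le_mul_of_nonneg_left ht' (by positivity)
          have h3 : -Real.pi * (n : ℝ) ^ 2 * t / N = -(Real.pi * (n : ℝ) ^ 2 / N * t) := by
            ring
          have h4 : -(Real.pi * (x / 2) / N) * (n : ℝ) ^ 2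
              = -(Real.pi * (n : ℝ) ^ 2 / N * (x / 2)) := by ring
          rw [h3, h4]
          linarith
  exact hco.continuousAt (Ici_mem_nhds (by linarith))


lemma exp_neg_le_four_div_sq {z : ℝ} (hz : 0 < z) : Real.exp (-z) ≤ 4 / z ^ 2 := by
  have h1 : z / 2 + 1 ≤ Real.exp (z / 2) := by
    have := Real.add_one_le_exp (z / 2); linarith
  have h3 : Real.exp (z / 2) ^ 2 = Real.exp z := by
    rw [sq, ← Real.exp_add]; norm_num
  have h4 : z ^ 2 / 4 ≤ Real.exp z := by nlinarith [Real.exp_pos (z / 2)]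
  rw [Real.exp_neg, inv_eq_one_div, div_le_div_iff₀ (Real.exp_pos z) (by positivity)]
  nlinarith [Real.exp_pos z]

end Stmt12Aux

set_option maxHeartbeats 2000000 in
/-- The Mellin convolution `G(y) = ∫_0^∞ ϑ(iyy',ν) ϑ(iy/y', conj ν) dy'/y'` of the two
ϑ-series of a primitive even Dirichlet character converges for every `y > 0` and transforms
with weight 1 under `y → 1/y`: `G(1/y) = y G(y)`. -/
theorem stmt12 (N : ℕ) (hN : 1 < N) (ν : DirichletCharacter ℂ N)
    (hprim : ν.IsPrimitive) (heven : ν (-1) = 1)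
    (Θ Θbar G : ℝ → ℂ)
    (hΘ : ∀ y : ℝ, Θ y = ∑' n : ℤ, ν (n : ZMod N) *
      ((Real.exp (-Real.pi * (n : ℝ) ^ 2 * y / N) : ℝ) : ℂ))
    (hΘbar : ∀ y : ℝ, Θbar y = ∑' n : ℤ, (starRingEnd ℂ) (ν (n : ZMod N)) *
      ((Real.exp (-Real.pi * (n : ℝ) ^ 2 * y / N) : ℝ) : ℂ))
    (hG : ∀ y : ℝ, G y = ∫ y' in Set.Ioi (0 : ℝ), Θ (y * y') * Θbar (y / y') / (y' : ℂ)) :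
    (∀ y : ℝ, 0 < y →
      IntegrableOn (fun y' : ℝ => Θ (y * y') * Θbar (y / y') / (y' : ℂ)) (Set.Ioi 0)) ∧
    ∀ y : ℝ, 0 < y → G (1 / y) = y * G y := by
  haveI : NeZero N := ⟨by omega⟩
  have hNR : (0 : ℝ) < N := by exact_mod_cast Nat.pos_of_ne_zero (NeZero.ne N)
  set τ : ℂ := gaussSum ν (ZMod.stdAddChar) with hτdef
  -- conjugation relation
  have hconj : ∀ x : ℝ, Θbar x = (starRingEnd ℂ) (Θ x) := by
    intro x
    rw [hΘ x, hΘbar x]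
    have hstar : (starRingEnd ℂ) (∑' n : ℤ, ν (n : ZMod N) *
        ((Real.exp (-Real.pi * (n : ℝ) ^ 2 * x / N) : ℝ) : ℂ))
        = ∑' n : ℤ, (starRingEnd ℂ) (ν (n : ZMod N) *
          ((Real.exp (-Real.pi * (n : ℝ) ^ 2 * x / N) : ℝ) : ℂ)) := by
      exact tsum_star
    rw [hstar]
    refine tsum_congr (fun n => ?_)
    rw [map_mul, Complex.conj_ofReal]
  have hτN : τ * (starRingEnd ℂ) τ = (N : ℂ) := gauss_conj_mul hN ν hprim
  -- functional equations
  have hFE : ∀ u : ℝ, 0 < u →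
      Θ (1 / u) = ((Real.sqrt (u / N) : ℝ) : ℂ) * τ * Θbar u := by
    intro u hu
    rw [hΘ, hΘbar]
    exact theta_fe hN ν hprim heven hu
  have hFEbar : ∀ u : ℝ, 0 < u →
      Θbar (1 / u) = ((Real.sqrt (u / N) : ℝ) : ℂ) * (starRingEnd ℂ) τ * Θ u := by
    intro u hu
    rw [hconj, hFE u hu, map_mul, map_mul, Complex.conj_ofReal, hconj u, Complex.conj_conj]
  -- continuity
  have hΘc : ∀ x : ℝ, 0 < x → ContinuousAt Θ x := by
    intro x hx
    have hfun : Θ = fun t : ℝ => ∑' n : ℤ, ν (n : ZMod N) *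
        ((Real.exp (-Real.pi * (n : ℝ) ^ 2 * t / N) : ℝ) : ℂ) := funext hΘ
    rw [hfun]
    exact theta_continuousAt ν hx
  have hΘbarc : ∀ x : ℝ, 0 < x → ContinuousAt Θbar x := by
    intro x hx
    have hfun : Θbar = fun t : ℝ => (starRingEnd ℂ) (Θ t) := funext hconj
    rw [hfun]
    exact (continuous_star.continuousAt).comp (hΘc x hx)
  have hcont : ∀ y : ℝ, 0 < y →
      ContinuousOn (fun t : ℝ => Θ (y * t) * Θbar (y / t) / (t : ℂ)) (Set.Ioi 0) := by
    intro y hy t ht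
    have ht0 : (0 : ℝ) < t := ht
    apply ContinuousAt.continuousWithinAt
    apply ContinuousAt.div
    · apply ContinuousAt.mul
      · exact (hΘc (y * t) (by positivity)).comp
          ((continuous_const.mul continuous_id).continuousAt)
      · exact (hΘbarc (y / t) (by positivity)).comp
          (continuousAt_const.div continuousAt_id (ne_of_gt ht0))
    · exact Complex.continuous_ofReal.continuousAt
    · exact Complex.ofReal_ne_zero.mpr (ne_of_gt ht0)
  have hnbar : ∀ x : ℝ, ‖Θbar x‖ = ‖Θ x‖ := by
    intro x
    rw [hconj]
    exact RCLike.norm_conj _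
  -- integrability
  have hint : ∀ y : ℝ, 0 < y →
      IntegrableOn (fun t : ℝ => Θ (y * t) * Θbar (y / t) / (t : ℂ)) (Set.Ioi 0) := by
    intro y hy
    obtain ⟨C1, hC10, hC1⟩ := theta_decay hN ν hy
    obtain ⟨C2, hC20, hC2⟩ := theta_decay hN ν (show (0 : ℝ) < 1 / y by positivity)
    have hbΘ : ∀ x : ℝ, y ≤ x → ‖Θ x‖ ≤ C1 * Real.exp (-Real.pi * x / N) := by
      intro x hx; rw [hΘ]; exact hC1 x hx
    have hbΘ' : ∀ x : ℝ, 1 / y ≤ x → ‖Θ x‖ ≤ C2 * Real.exp (-Real.pi * x / N) := by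
      intro x hx; rw [hΘ]; exact hC2 x hx
    have hmeas : AEStronglyMeasurable (fun t : ℝ => Θ (y * t) * Θbar (y / t) / (t : ℂ))
        (volume.restrict (Set.Ioi 0)) :=
      (hcont y hy).aestronglyMeasurable measurableSet_Ioi
    have hnorm_eq : ∀ t : ℝ, 0 < t →
        ‖Θ (y * t) * Θbar (y / t) / (t : ℂ)‖ = ‖Θ (y * t)‖ * ‖Θbar (y / t)‖ / t := by
      intro t ht0
      rw [norm_div, norm_mul, Complex.norm_real, Real.norm_eq_abs, abs_of_pos ht0]
    rw [show Set.Ioi (0 : ℝ) = Set.Ioc 0 1 ∪ Set.Ioi 1 from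
      (Set.Ioc_union_Ioi_eq_Ioi zero_le_one).symm]
    apply IntegrableOn.union
    · -- on (0, 1] : bounded
      set c : ℝ := Real.pi / (y * N) with hcdef
      have hc : 0 < c := by rw [hcdef]; positivity
      set M : ℝ := Real.sqrt (1 / (y * N)) * ‖τ‖ * C2 * C1 * (4 / c ^ 2) with hMdef
      refine Integrable.mono' (g := fun _ : ℝ => M)
        (integrableOn_const (C := M) measure_Ioc_lt_top.ne)
        (hmeas.mono_measure (Measure.restrict_mono (fun x hx => hx.1) le_rfl)) ?_
      filter_upwards [ae_restrict_mem measurableSet_Ioc] with t ht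
      obtain ⟨ht0, ht1⟩ := ht
      have hyt : 0 < y * t := by positivity
      -- bound ‖Θ (y*t)‖ via FE
      have e2 : y * t = 1 / (1 / (y * t)) := by field_simp
      have hsq1 : Real.sqrt (1 / (y * t) / N) ≤ Real.sqrt (1 / (y * N)) * (1 / t) := by
        have hh : 1 / (y * t) / N = 1 / (y * N) * (1 / t) := by field_simp
        rw [hh, Real.sqrt_mul (by positivity)]
        refine mul_le_mul_of_nonneg_left ?_ (Real.sqrt_nonneg _)
        have h1t : (1 : ℝ) ≤ 1 / t := by
          rw [le_div_iff₀ ht0]; simpa using ht1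
        nlinarith [Real.sq_sqrt (by positivity : (0:ℝ) ≤ 1 / t), Real.sqrt_nonneg (1 / t)]
      have hb1 : ‖Θ (y * t)‖ ≤ Real.sqrt (1 / (y * N)) * (1 / t) * ‖τ‖ *
          (C2 * Real.exp (-(c / t))) := by
        rw [e2, hFE (1 / (y * t)) (by positivity)]
        rw [norm_mul, norm_mul, Complex.norm_real, Real.norm_eq_abs,
          _root_.abs_of_nonneg (Real.sqrt_nonneg _)]
        have harg : -Real.pi * (1 / (y * t)) / N = -(c / t) := by
          rw [hcdef]; field_simp
        have hb2 : ‖Θbar (1 / (y * t))‖ ≤ C2 * Real.exp (-(c / t)) := by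
          rw [hnbar, ← harg]
          refine hbΘ' (1 / (y * t)) ?_
          rw [div_le_div_iff₀ hy (by positivity)]
          nlinarith
        calc Real.sqrt (1 / (y * t) / N) * ‖τ‖ * ‖Θbar (1 / (y * t))‖
            ≤ (Real.sqrt (1 / (y * N)) * (1 / t)) * ‖τ‖ * (C2 * Real.exp (-(c / t))) := by
              gcongr
          _ = Real.sqrt (1 / (y * N)) * (1 / t) * ‖τ‖ * (C2 * Real.exp (-(c / t))) := by ring
      have hb3 : ‖Θbar (y / t)‖ ≤ C1 := by
        have := hbΘ (y / t) (by
          rw [le_div_iff₀ ht0]; nlinarith)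
        rw [hnbar]
        refine le_trans this ?_
        have : Real.exp (-Real.pi * (y / t) / N) ≤ 1 := by
          rw [← Real.exp_zero]
          apply Real.exp_le_exp.mpr
          rw [neg_mul, neg_div]
          exact neg_nonpos.mpr (by positivity)
        nlinarith
      have hexp : Real.exp (-(c / t)) ≤ 4 * t ^ 2 / c ^ 2 := by
        have h := exp_neg_le_four_div_sq (show 0 < c / t by positivity)
        have he : 4 / (c / t) ^ 2 = 4 * t ^ 2 / c ^ 2 := by
          field_simp
        rw [he] at h
        exact h
      rw [hnorm_eq t ht0]
      calc ‖Θ (y * t)‖ * ‖Θbar (y / t)‖ / t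
          ≤ (Real.sqrt (1 / (y * N)) * (1 / t) * ‖τ‖ * (C2 * (4 * t ^ 2 / c ^ 2))) * C1 / t := by
            gcongr
            exact hb1.trans (by gcongr)
        _ = M := by
            rw [hMdef]
            field_simp
    · -- on (1, ∞) : exponential decay
      set K : ℝ := C1 * (Real.sqrt (1 / (y * N)) * ‖τ‖ * C2) with hKdef
      have hK0 : 0 ≤ K := by positivity
      refine Integrable.mono'
        ((exp_neg_integrableOn_Ioi 1 (show 0 < Real.pi * y / N by positivity)).const_mul K)
        (hmeas.mono_measure (Measure.restrict_mono (Set.Ioi_subset_Ioi zero_le_one) le_rfl))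
        ?_
      filter_upwards [ae_restrict_mem measurableSet_Ioi] with t ht
      have ht1 : (1 : ℝ) < t := ht
      have ht0 : (0 : ℝ) < t := lt_trans one_pos ht1
      have e1 : y / t = 1 / (t / y) := by field_simp
      have hsq2 : Real.sqrt (t / y / N) ≤ t * Real.sqrt (1 / (y * N)) := by
        have hh : t / y / N = t * (1 / (y * N)) := by field_simp
        rw [hh, Real.sqrt_mul ht0.le]
        refine mul_le_mul_of_nonneg_right ?_ (Real.sqrt_nonneg _)
        nlinarith [Real.sq_sqrt ht0.le, Real.sqrt_nonneg t]
      have hbbar : ‖Θbar (y / t)‖ ≤ t * Real.sqrt (1 / (y * N)) * ‖τ‖ *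
          (C2 * Real.exp (-Real.pi * (t / y) / N)) := by
        rw [e1, hFEbar (t / y) (by positivity)]
        rw [norm_mul, norm_mul, Complex.norm_real, Real.norm_eq_abs,
          _root_.abs_of_nonneg (Real.sqrt_nonneg _), RCLike.norm_conj]
        have hb2 : ‖Θ (t / y)‖ ≤ C2 * Real.exp (-Real.pi * (t / y) / N) := by
          refine hbΘ' (t / y) ?_
          gcongr
        gcongr
      have hb1 : ‖Θ (y * t)‖ ≤ C1 * Real.exp (-Real.pi * (y * t) / N) := by
        refine hbΘ (y * t) ?_
        nlinarith
      rw [hnorm_eq t ht0]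
      calc ‖Θ (y * t)‖ * ‖Θbar (y / t)‖ / t
          ≤ (C1 * Real.exp (-Real.pi * (y * t) / N)) *
            (t * Real.sqrt (1 / (y * N)) * ‖τ‖ *
              (C2 * Real.exp (-Real.pi * (t / y) / N))) / t := by gcongr
        _ = K * (Real.exp (-Real.pi * (y * t) / N) * Real.exp (-Real.pi * (t / y) / N)) := by
            rw [hKdef]
            field_simp
        _ ≤ K * Real.exp (-(Real.pi * y / N) * t) := by
            refine mul_le_mul_of_nonneg_left ?_ hK0
            rw [← Real.exp_add]
            apply Real.exp_le_exp.mpr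
            have h1 : -Real.pi * (y * t) / N = -(Real.pi * y / N) * t := by ring
            have h2 : -Real.pi * (t / y) / N ≤ 0 := by
              rw [neg_mul, neg_div]
              exact neg_nonpos.mpr (by positivity)
            linarith [h1.le, h1.ge]
  refine ⟨hint, ?_⟩
  -- the transformation law
  intro y hy
  have hκ : ∀ t : ℝ, t ∈ Set.Ioi (0 : ℝ) →
      Θ (1 / y * t) * Θbar (1 / y / t) / (t : ℂ)
        = (y : ℂ) * (Θ (y * t) * Θbar (y / t) / (t : ℂ)) := by
    intro t ht
    have ht0 : (0 : ℝ) < t := ht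
    have h1 : 1 / y * t = 1 / (y / t) := by field_simp
    have h2 : 1 / y / t = 1 / (y * t) := by rw [div_div]
    rw [h1, h2, hFE (y / t) (by positivity), hFEbar (y * t) (by positivity)]
    have hsq : ((Real.sqrt (y / t / N) : ℝ) : ℂ) * ((Real.sqrt (y * t / N) : ℝ) : ℂ)
        = (((y / N : ℝ)) : ℂ) := by
      rw [← Complex.ofReal_mul, ← Real.sqrt_mul (by positivity)]
      have hh : y / t / N * (y * t / N) = (y / N) ^ 2 := by field_simp
      rw [hh, Real.sqrt_sq (by positivity)]
    have hyN : (((y / N : ℝ)) : ℂ) * (N : ℂ) = (y : ℂ) := by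
      push_cast
      field_simp [show (N : ℂ) ≠ 0 by exact_mod_cast hNR.ne']
    calc ((Real.sqrt (y / t / N) : ℝ) : ℂ) * τ * Θbar (y / t) *
          (((Real.sqrt (y * t / N) : ℝ) : ℂ) * (starRingEnd ℂ) τ * Θ (y * t)) / (t : ℂ)
        = (((Real.sqrt (y / t / N) : ℝ) : ℂ) * ((Real.sqrt (y * t / N) : ℝ) : ℂ)) *
          (τ * (starRingEnd ℂ) τ) * (Θ (y * t) * Θbar (y / t) / (t : ℂ)) := by ring
      _ = (y : ℂ) * (Θ (y * t) * Θbar (y / t) / (t : ℂ)) := by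
          rw [hsq, hτN, hyN]
  rw [hG (1 / y), hG y, ← integral_const_mul]
  exact setIntegral_congr_fun measurableSet_Ioi hκ
end

section
/- Let p be a prime and let μ be an additive Haar measure on the p-adic field ℚ_p normalized so that μ(ℤ_p) = 1. Then for every real σ > 0, ∫_{x ∈ ℤ_p} |x|_p^{σ−1} dμ(x) = (1 − 1/p)/(1 − p^{−σ}), and consequently (p/(p−1))·∫_{x ∈ ℤ_p} |x|_p^{σ−1} dμ(x) = 1/(1 − p^{−σ}). -/
open MeasureTheory Pointwise
open scoped ENNReal

variable {p : ℕ} [hp : Fact p.Prime]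

/-- closed ball of radius p^{-n} in ℚ_p -/
def pBall (p : ℕ) [Fact p.Prime] (n : ℕ) : Set ℚ_[p] :=
  {x : ℚ_[p] | ‖x‖ ≤ (p : ℝ) ^ (-(n : ℤ))}

lemma pBall_zero : pBall p 0 = {x : ℚ_[p] | ‖x‖ ≤ 1} := by
  simp [pBall]

lemma pBall_decomp (n : ℕ) :
    pBall p n = ⋃ c ∈ Finset.range p, (((c : ℚ_[p]) * (p : ℚ_[p]) ^ n) +ᵥ pBall p (n+1)) := by
  ext x
  simp only [Set.mem_iUnion, Finset.mem_range, Set.mem_vadd_set_iff_neg_vadd_mem, vadd_eq_add,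
    pBall, Set.mem_setOf_eq, exists_prop]
  constructor
  · intro hx
    have hpn : ((p : ℚ_[p]) ^ n) ≠ 0 := pow_ne_zero _ (Nat.cast_ne_zero.mpr hp.out.ne_zero)
    have hq : (0:ℝ) < (p : ℝ) ^ (-(n:ℤ)) := zpow_pos (by exact_mod_cast hp.out.pos) _
    have hz : ‖x / (p : ℚ_[p]) ^ n‖ ≤ 1 := by
      rw [norm_div, Padic.norm_p_pow, div_le_one hq]
      simpa using hx
    set z : ℤ_[p] := ⟨x / (p : ℚ_[p]) ^ n, hz⟩ with hzdef
    refine ⟨z.appr 1, z.appr_lt 1 |>.trans_eq (pow_one p), ?_⟩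
    have hspec := z.appr_spec 1
    rw [← PadicInt.norm_le_pow_iff_mem_span_pow] at hspec
    have hcoe : (-(↑(z.appr 1) * (p : ℚ_[p]) ^ n) + x)
        = ((z - (z.appr 1 : ℤ_[p]) : ℤ_[p]) : ℚ_[p]) * (p : ℚ_[p]) ^ n := by
      rw [PadicInt.coe_sub]
      push_cast [hzdef]
      field_simp
      ring
    rw [hcoe, norm_mul, Padic.norm_p_pow]
    calc ‖((z - (z.appr 1 : ℤ_[p]) : ℤ_[p]) : ℚ_[p])‖ * (p:ℝ) ^ (-(n:ℤ))
        ≤ (p:ℝ) ^ (-(1:ℤ)) * (p:ℝ) ^ (-(n:ℤ)) := by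
          apply mul_le_mul_of_nonneg_right _ hq.le
          simpa [PadicInt.norm_def] using hspec
      _ = (p:ℝ) ^ (-((n+1 : ℕ) : ℤ)) := by
          rw [← zpow_add₀ (by exact_mod_cast hp.out.pos.ne')]
          push_cast; ring_nf
  · rintro ⟨c, hc, hx⟩
    have h1 : ‖(-(↑c * (p : ℚ_[p]) ^ n) + x) + (↑c * (p : ℚ_[p]) ^ n)‖ ≤ (p:ℝ) ^ (-(n:ℤ)) := by
      apply (Padic.nonarchimedean _ _).trans
      apply max_le
      · refine hx.trans (zpow_le_zpow_right₀ (by exact_mod_cast hp.out.one_le) ?_)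
        push_cast; omega
      · rw [norm_mul, Padic.norm_p_pow]
        calc ‖(c : ℚ_[p])‖ * (p:ℝ) ^ (-(n:ℤ)) ≤ 1 * (p:ℝ) ^ (-(n:ℤ)) := by
              apply mul_le_mul_of_nonneg_right (Padic.norm_int_le_one c) (zpow_pos (by exact_mod_cast hp.out.pos) _).le
          _ = (p:ℝ) ^ (-(n:ℤ)) := one_mul _
    simpa using h1

lemma pBall_measurable (n : ℕ) [MeasurableSpace ℚ_[p]] [BorelSpace ℚ_[p]] :
    MeasurableSet (pBall p n) :=
  (isClosed_le (by continuity) continuous_const).measurableSet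

lemma pBall_disjoint (n : ℕ) :
    (↑(Finset.range p) : Set ℕ).PairwiseDisjoint
      (fun c => (((c : ℚ_[p]) * (p : ℚ_[p]) ^ n) +ᵥ pBall p (n+1))) := by
  intro c hc d hd hcd
  simp only [Finset.coe_range, Set.mem_Iio] at hc hd
  simp only [Function.onFun]
  rw [Set.disjoint_left]
  rintro x hx hx'
  rw [Set.mem_vadd_set_iff_neg_vadd_mem] at hx hx'
  simp only [vadd_eq_add, pBall, Set.mem_setOf_eq] at hx hx'
  have hdiff : ‖((c : ℚ_[p]) - d) * (p:ℚ_[p])^n‖ ≤ (p:ℝ) ^ (-((n+1:ℕ):ℤ)) := by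
    have : ((c : ℚ_[p]) - d) * (p:ℚ_[p])^n
        = (-(↑d * (p:ℚ_[p])^n) + x) - (-(↑c * (p:ℚ_[p])^n) + x) := by ring
    rw [this]
    rw [sub_eq_add_neg]
    exact (Padic.nonarchimedean _ _).trans (by rw [norm_neg]; exact max_le hx' hx)
  rw [norm_mul, Padic.norm_p_pow] at hdiff
  have hppos : (0:ℝ) < (p:ℝ) := by exact_mod_cast hp.out.pos
  have hnorm : ‖((c:ℤ) - d : ℤ) • (1 : ℚ_[p])‖ < 1 := by
    have h2 : (p:ℝ) ^ (-((n+1:ℕ):ℤ)) = (p:ℝ)^(-(1:ℤ)) * (p:ℝ)^(-(n:ℤ)) := by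
      rw [← zpow_add₀ hppos.ne']; push_cast; ring_nf
    rw [h2] at hdiff
    have := le_of_mul_le_mul_right hdiff (zpow_pos hppos (-(n:ℤ)))
    calc ‖((c:ℤ) - d : ℤ) • (1 : ℚ_[p])‖ = ‖((c:ℚ_[p]) - d)‖ := by push_cast; simp
      _ ≤ (p:ℝ)^(-(1:ℤ)) := this
      _ < 1 := by
        rw [zpow_neg, zpow_one]
        exact inv_lt_one_of_one_lt₀ (by exact_mod_cast hp.out.one_lt)
  rw [zsmul_eq_mul, mul_one] at hnorm
  have hdvd : (p:ℤ) ∣ ((c:ℤ) - d) := Padic.norm_intCast_lt_one_iff.mp hnorm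
  have h1 : p ∣ ((c:ℤ) - d).natAbs := by
    have := Int.natAbs_dvd_natAbs.mpr hdvd
    simpa using this
  have := Nat.le_of_dvd (by omega) h1
  omega

lemma pBall_measure [MeasurableSpace ℚ_[p]] [BorelSpace ℚ_[p]]
    (μ : Measure ℚ_[p]) [μ.IsAddHaarMeasure]
    (hμ : μ (pBall p 0) = 1) (n : ℕ) : μ (pBall p n) = ((p : ℝ≥0∞)⁻¹) ^ n := by
  have hstep : ∀ m : ℕ, μ (pBall p m) = p * μ (pBall p (m+1)) := by
    intro m
    rw [pBall_decomp m, measure_biUnion_finset (pBall_disjoint m)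
      (fun c _ => (pBall_measurable (m+1)).const_vadd _)]
    simp [measure_vadd, Finset.sum_const]
  have hppos : (p : ℝ≥0∞) ≠ 0 := by exact_mod_cast hp.out.ne_zero
  have hptop : (p : ℝ≥0∞) ≠ ⊤ := ENNReal.natCast_ne_top p
  induction n with
  | zero => simpa using hμ
  | succ n ih =>
    have h := hstep n
    rw [ih] at h
    have h2 := congrArg (fun x => (p:ℝ≥0∞)⁻¹ * x) h
    simp only [← mul_assoc, ENNReal.inv_mul_cancel hppos hptop, one_mul] at h2
    rw [← h2, pow_succ]; ring

def pSph (p : ℕ) [Fact p.Prime] (n : ℕ) : Set ℚ_[p] :=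
  {x : ℚ_[p] | ‖x‖ = (p : ℝ) ^ (-(n : ℤ))}

lemma one_lt_pR : (1:ℝ) < (p:ℝ) := by exact_mod_cast hp.out.one_lt

lemma pSph_eq (n : ℕ) : pSph p n = pBall p n \ pBall p (n+1) := by
  have h1 : (1:ℝ) < p := one_lt_pR
  ext x
  simp only [pSph, pBall, Set.mem_diff, Set.mem_setOf_eq, not_le]
  constructor
  · intro hx
    refine ⟨hx.le, hx ▸ ?_⟩
    rw [zpow_lt_zpow_iff_right₀ h1]
    push_cast; omega
  · rintro ⟨h2, h3⟩
    have hx0 : x ≠ 0 := by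
      intro h; rw [h, norm_zero] at h3
      exact absurd h3 (not_lt.mpr (zpow_pos (by linarith) _).le)
    obtain hv := Padic.norm_eq_zpow_neg_valuation hx0
    rw [hv] at h2 h3 ⊢
    rw [zpow_le_zpow_iff_right₀ h1] at h2
    rw [zpow_lt_zpow_iff_right₀ h1] at h3
    congr 1
    push_cast at h2 h3 ⊢
    omega

lemma pSph_measurable (n : ℕ) [MeasurableSpace ℚ_[p]] [BorelSpace ℚ_[p]] :
    MeasurableSet (pSph p n) := by
  rw [pSph_eq]
  exact (pBall_measurable n).diff (pBall_measurable (n+1))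

lemma pSph_measure [MeasurableSpace ℚ_[p]] [BorelSpace ℚ_[p]]
    (μ : Measure ℚ_[p]) [μ.IsAddHaarMeasure]
    (hμ : μ (pBall p 0) = 1) (n : ℕ) :
    μ (pSph p n) = ((p : ℝ≥0∞)⁻¹) ^ n - ((p : ℝ≥0∞)⁻¹) ^ (n+1) := by
  rw [pSph_eq, measure_diff ?_ ((pBall_measurable (n+1)).nullMeasurableSet) ?_,
    pBall_measure μ hμ, pBall_measure μ hμ]
  · intro x hx
    simp only [pBall, Set.mem_setOf_eq] at hx ⊢
    refine hx.trans (zpow_le_zpow_right₀ (one_lt_pR (p := p)).le ?_)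
    push_cast; omega
  · rw [pBall_measure μ hμ]
    exact (ENNReal.pow_ne_top (ENNReal.inv_ne_top.mpr (by exact_mod_cast hp.out.ne_zero)))

lemma pBall_ae_eq [MeasurableSpace ℚ_[p]] [BorelSpace ℚ_[p]]
    (μ : Measure ℚ_[p]) [μ.IsAddHaarMeasure] (hμ : μ (pBall p 0) = 1) :
    (pBall p 0 : Set ℚ_[p]) =ᵐ[μ] ⋃ n, pSph p n := by
  have hzero : μ {(0:ℚ_[p])} = 0 := by
    have hle : ∀ n : ℕ, μ {(0:ℚ_[p])} ≤ ((p : ℝ≥0∞)⁻¹) ^ n := by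
      intro n
      rw [← pBall_measure μ hμ]
      apply measure_mono
      intro x hx
      simp only [Set.mem_singleton_iff] at hx
      simp [pBall, hx, (zpow_pos (by linarith [one_lt_pR (p := p)] : (0:ℝ) < p) _).le]
    have htend : Filter.Tendsto (fun n : ℕ => ((p : ℝ≥0∞)⁻¹) ^ n) Filter.atTop (nhds 0) :=
      ENNReal.tendsto_pow_atTop_nhds_zero_of_lt_one
        (ENNReal.inv_lt_one.mpr (by exact_mod_cast hp.out.one_lt))
    simpa using ge_of_tendsto' htend hle
  rw [Filter.eventuallyEq_set]
  have : ∀ x : ℚ_[p], x ≠ 0 → (x ∈ pBall p 0 ↔ x ∈ ⋃ n, pSph p n) := by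
    intro x hx
    simp only [pBall, Set.mem_setOf_eq, Set.mem_iUnion, pSph]
    constructor
    · intro h
      have hv := Padic.norm_eq_zpow_neg_valuation hx
      have hvnn : 0 ≤ x.valuation := by
        by_contra hneg
        push_neg at hneg
        rw [hv] at h
        simp only [Nat.cast_zero, neg_zero, zpow_zero] at h
        have : (1:ℝ) < (p:ℝ) ^ (-x.valuation) :=
          one_lt_zpow₀ (one_lt_pR) (by omega)
        linarith
      refine ⟨x.valuation.toNat, ?_⟩
      rw [hv]
      congr 1
      omega
    · rintro ⟨n, hn⟩
      rw [hn]
      apply zpow_le_one_of_nonpos₀ (one_lt_pR (p:=p)).le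
      omega
  have hsub : {x : ℚ_[p] | ¬(x ∈ pBall p 0 ↔ x ∈ ⋃ n, pSph p n)} ⊆ {(0:ℚ_[p])} := by
    intro x hx
    simp only [Set.mem_setOf_eq] at hx
    by_contra h0
    exact hx (this x (by simpa using h0))
  exact measure_mono_null hsub hzero

lemma pSph_disjoint : Pairwise (Function.onFun Disjoint fun n => pSph p n) := by
  intro m n hmn
  simp only [Function.onFun]
  rw [Set.disjoint_left]
  intro x hx hx'
  simp only [pSph, Set.mem_setOf_eq] at hx hx'
  rw [hx] at hx'
  rw [zpow_right_injective₀ (by linarith [one_lt_pR (p:=p)]) (by linarith [one_lt_pR (p:=p)]) |>.eq_iff] at hx'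
  exact hmn (by exact_mod_cast neg_injective hx')

lemma key_lintegral [MeasurableSpace ℚ_[p]] [BorelSpace ℚ_[p]]
    (μ : Measure ℚ_[p]) [μ.IsAddHaarMeasure] (hμ : μ (pBall p 0) = 1)
    (σ : ℝ) (hσ : 0 < σ) :
    ∫⁻ x in pBall p 0, ENNReal.ofReal (‖x‖ ^ (σ - 1)) ∂μ
      = ENNReal.ofReal ((1 - 1 / p) / (1 - (p : ℝ) ^ (-σ))) := by
  have h1 : (1:ℝ) < (p:ℝ) := one_lt_pR
  set r : ℝ := (p:ℝ)⁻¹ with hr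
  have hr0 : 0 < r := by positivity
  have hr1 : r < 1 := inv_lt_one_of_one_lt₀ h1
  rw [Measure.restrict_congr_set (pBall_ae_eq μ hμ),
    lintegral_iUnion (fun n => pSph_measurable n) pSph_disjoint]
  have hterm : ∀ n : ℕ, ∫⁻ x in pSph p n, ENNReal.ofReal (‖x‖ ^ (σ - 1)) ∂μ
      = ENNReal.ofReal ((r ^ σ) ^ n * (1 - r)) := by
    intro n
    have hconst : ∀ x ∈ pSph p n,
        ENNReal.ofReal (‖x‖ ^ (σ - 1)) = ENNReal.ofReal ((r ^ n) ^ (σ - 1)) := by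
      intro x hx
      simp only [pSph, Set.mem_setOf_eq] at hx
      rw [hx, zpow_neg, zpow_natCast, ← inv_pow]
    rw [setLIntegral_congr_fun (pSph_measurable n) hconst,
      setLIntegral_const, pSph_measure μ hμ]
    have hq : ((p : ℝ≥0∞)⁻¹) = ENNReal.ofReal r := by
      rw [hr, ENNReal.ofReal_inv_of_pos (by linarith), ENNReal.ofReal_natCast]
    rw [hq, ← ENNReal.ofReal_pow hr0.le, ← ENNReal.ofReal_pow hr0.le,
      ← ENNReal.ofReal_sub _ (pow_nonneg hr0.le _),
      ← ENNReal.ofReal_mul (Real.rpow_nonneg (pow_nonneg hr0.le n) _)]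
    congr 1
    have : r ^ (n+1) = r ^ n * r := pow_succ r n
    rw [this, ← Real.rpow_natCast r n, ← Real.rpow_natCast (r ^ σ) n,
      ← Real.rpow_mul hr0.le, ← Real.rpow_mul hr0.le]
    rw [show (r ^ ((n:ℝ)) - r ^ (n:ℝ) * r) = r ^ (n:ℝ) * (1 - r) by ring,
      ← mul_assoc, ← Real.rpow_add hr0]
    ring_nf
  simp_rw [hterm]
  have hb0 : (0:ℝ) ≤ r ^ σ := Real.rpow_nonneg hr0.le σ
  have hb1 : r ^ σ < 1 := Real.rpow_lt_one hr0.le hr1 hσ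
  have hsum : Summable (fun n : ℕ => (r ^ σ) ^ n * (1 - r)) :=
    (summable_geometric_of_lt_one hb0 hb1).mul_right _
  rw [← ENNReal.ofReal_tsum_of_nonneg (fun n => mul_nonneg (pow_nonneg hb0 n) (by linarith)) hsum,
    tsum_mul_right, tsum_geometric_of_lt_one hb0 hb1]
  congr 1
  have hrs : r ^ σ = (p:ℝ) ^ (-σ) := by
    rw [hr, Real.inv_rpow (by linarith), ← Real.rpow_neg (by linarith)]
  rw [hrs, hr, div_eq_inv_mul, one_div]

set_option maxHeartbeats 400000 in
/-- The local zeta integral: for a Haar measure `μ` on `ℚ_p` with `μ(ℤ_p) = 1` and `σ > 0`,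
`∫_{ℤ_p} |x|_p^(σ-1) dμ = (1 - 1/p)/(1 - p^(-σ))`, and hence
`(p/(p-1)) ∫_{ℤ_p} |x|_p^(σ-1) dμ = 1/(1 - p^(-σ)) = ζ_p(σ)`. -/
theorem stmt14 (p : ℕ) [hp : Fact p.Prime]
    [MeasurableSpace ℚ_[p]] [BorelSpace ℚ_[p]]
    (μ : Measure ℚ_[p]) [μ.IsAddHaarMeasure]
    (hμ : μ {x : ℚ_[p] | ‖x‖ ≤ 1} = 1) (σ : ℝ) (hσ : 0 < σ) :
    (∫ x in {x : ℚ_[p] | ‖x‖ ≤ 1}, ‖x‖ ^ (σ - 1) ∂μ)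
        = (1 - 1 / p) / (1 - (p : ℝ) ^ (-σ)) ∧
    ((p : ℝ) / (p - 1)) * ∫ x in {x : ℚ_[p] | ‖x‖ ≤ 1}, ‖x‖ ^ (σ - 1) ∂μ
        = 1 / (1 - (p : ℝ) ^ (-σ)) := by
  have h1 : (1:ℝ) < (p:ℝ) := by exact_mod_cast hp.out.one_lt
  have hball : {x : ℚ_[p] | ‖x‖ ≤ 1} = pBall p 0 := pBall_zero.symm
  rw [hball] at hμ ⊢
  have hps : (p:ℝ) ^ (-σ) < 1 := Real.rpow_lt_one_of_one_lt_of_neg h1 (by linarith)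
  have hps0 : (0:ℝ) < (p:ℝ) ^ (-σ) := Real.rpow_pos_of_pos (by linarith) _
  have hint : (∫ x in pBall p 0, ‖x‖ ^ (σ - 1) ∂μ)
      = (1 - 1 / p) / (1 - (p : ℝ) ^ (-σ)) := by
    have hm : Measurable (fun x : ℝ => x ^ (σ - 1)) :=
      measurable_of_continuousOn_compl_singleton 0
        (continuousOn_id.rpow_const fun x hx => Or.inl hx)
    rw [MeasureTheory.integral_eq_lintegral_of_nonneg_ae
      (Filter.Eventually.of_forall fun x => Real.rpow_nonneg (norm_nonneg x) _)
      ((hm.comp measurable_norm).aestronglyMeasurable),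
      key_lintegral μ hμ σ hσ, ENNReal.toReal_ofReal]
    apply div_nonneg _ (by linarith)
    have : 1/(p:ℝ) ≤ 1 := by
      rw [div_le_one (by linarith)]; linarith
    linarith
  refine ⟨hint, ?_⟩
  rw [hint]
  have hp1 : (p:ℝ) - 1 ≠ 0 := by linarith
  have hd : 1 - (p:ℝ) ^ (-σ) ≠ 0 := by linarith
  field_simp
end

section
/- Let p be a prime and t ∈ ℝ. Set q = p^{1/2 + it} ∈ ℂ (that is, q = exp((1/2 + it)·log p)), A = q/(p·(q − 1)) and B = 1/(q − 1) (note |q| = √p > 1, so q ≠ 1). Then |B − A|² + (p − 2)·|A|² + |1 − A|² = 1. -/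
/-- Unitarity of the Mellin prefactors of the modified Kozyrev wavelets on the imaginary
axis: with `q = p^(1/2+it)`, `A = q/(p(q-1))`, `B = 1/(q-1)`, one has
`|B - A|² + (p-2)|A|² + |1 - A|² = 1`. -/
theorem stmt18 (p : ℕ) (hp : p.Prime) (t : ℝ) (q A B : ℂ)
    (hq : q = Complex.exp ((1 / 2 + (t : ℂ) * Complex.I) * (Real.log p : ℂ)))
    (hA : A = q / (p * (q - 1))) (hB : B = 1 / (q - 1)) :
    ‖B - A‖ ^ 2 + ((p : ℝ) - 2) * ‖A‖ ^ 2
      + ‖1 - A‖ ^ 2 = 1 := by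
  have hp0 : (0:ℝ) < p := by exact_mod_cast hp.pos
  have habs : ‖q‖ = Real.exp (Real.log p / 2) := by
    rw [hq, Complex.norm_exp]
    congr 1
    simp only [Complex.add_re, Complex.mul_re, Complex.add_im, Complex.mul_im,
      Complex.ofReal_re, Complex.ofReal_im, Complex.I_re, Complex.I_im,
      Complex.one_re, Complex.one_im, Complex.div_ofNat_re, Complex.div_ofNat_im]
    ring
  have hn : Complex.normSq q = p := by
    rw [← Complex.sq_norm q, habs, pow_two, ← Real.exp_add]
    rw [show Real.log p / 2 + Real.log p / 2 = Real.log p by ring]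
    exact Real.exp_log hp0
  have hp2 : (2:ℝ) ≤ p := by exact_mod_cast hp.two_le
  have hqne : q ≠ 1 := by
    intro h
    rw [h, Complex.normSq_one] at hn
    linarith
  have hd : q - 1 ≠ 0 := sub_ne_zero.mpr hqne
  have hpc : (p:ℂ) ≠ 0 := by exact_mod_cast hp.ne_zero
  have e1 : B - A = ((p:ℂ) - q)/(p*(q-1)) := by
    rw [hA, hB]; field_simp
  have e2 : 1 - A = ((p:ℂ)*q - p - q)/(p*(q-1)) := by
    rw [hA]; field_simp
  rw [e1, e2, hA, Complex.sq_norm, Complex.sq_norm, Complex.sq_norm,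
    map_div₀, map_div₀, map_div₀, map_mul]
  have hx : q.re * q.re + q.im * q.im = p := hn
  have hdn : (0:ℝ) < Complex.normSq (q-1) := Complex.normSq_pos.mpr hd
  have hp0' : (p:ℝ) ≠ 0 := ne_of_gt hp0
  simp only [Complex.normSq_apply, Complex.sub_re, Complex.sub_im, Complex.mul_re,
    Complex.mul_im, Complex.natCast_re, Complex.natCast_im, Complex.one_re, Complex.one_im]
  simp only [Complex.normSq_apply, Complex.sub_re, Complex.sub_im, Complex.one_re,
    Complex.one_im] at hdn
  simp only [sub_zero] at hdn
  have hden : (0:ℝ) < ↑p * ↑p * ((q.re - 1) * (q.re - 1) + q.im * q.im) :=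
    mul_pos (mul_pos hp0 hp0) hdn
  field_simp
  rw [div_eq_iff (ne_of_gt (by nlinarith))]
  linear_combination (-(p:ℝ)) * hx
end
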